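/- arXiv:1610.09744 — 6 statements merged into one kernel-verified Lean document; each statement's English description precedes it below -/
import Mathlib

section
/- Let (A, B, i, p) be a split pair of Hopf algebras, π = i ∘ p and Π = m ∘ (id ⊗ (S ∘ π)) ∘ Δ as in the context. Then Π is an idempotent (Π ∘ Π = Π), and Π ∘ π = ι ∘ ε = π ∘ Π. -/
open TensorProduct

noncomputable section

variable {k : Type} [Field k]
variable {A : Type} [Ring A] [HopfAlgebra k A]
variable {B : Type} [Ring B] [HopfAlgebra k B]

/-- `π = i ∘ p : B → B`, for a split pair of Hopf algebras `(A, B, i, p)`. -/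
def piMap (i : A →ₐc[k] B) (p : B →ₐc[k] A) : B →ₗ[k] B :=
  i.toLinearMap ∘ₗ p.toLinearMap

/-- `Π = m ∘ (id ⊗ (S ∘ π)) ∘ Δ : B → B`, i.e. `Π(b) = Σ b₍₁₎ · S(π(b₍₂₎))`. -/
def PiMap (i : A →ₐc[k] B) (p : B →ₐc[k] A) : B →ₗ[k] B :=
  LinearMap.mul' k B ∘ₗ
    TensorProduct.map LinearMap.id (HopfAlgebra.antipode k ∘ₗ piMap i p) ∘ₗ
    (Coalgebra.comul : B →ₗ[k] B ⊗[k] B)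

namespace Stmt3Aux

open scoped Coalgebra

variable {k : Type} [Field k]
variable {B : Type} [Ring B] [HopfAlgebra k B]
variable {D : Type} [Semiring D] [Algebra k D]
variable {D' : Type} [Semiring D'] [Algebra k D']

/-- Convolution product on `Hom(B, D)`. -/
def conv (f g : B →ₗ[k] D) : B →ₗ[k] D :=
  LinearMap.mul' k D ∘ₗ TensorProduct.map f g ∘ₗ (Coalgebra.comul : B →ₗ[k] B ⊗[k] B)

/-- Convolution unit. -/
def cunit : B →ₗ[k] D := Algebra.linearMap k D ∘ₗ (Coalgebra.counit : B →ₗ[k] k)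

lemma conv_repr (f g : B →ₗ[k] D) (b : B) {ι : Type*} (r : Coalgebra.Repr k b ι) :
    conv f g b = ∑ j ∈ r.index, f (r.left j) * g (r.right j) := by
  simp [conv, ← r.eq, map_sum]

lemma conv_cunit_right (f : B →ₗ[k] D) : conv f cunit = f := by
  ext b
  have h := Coalgebra.sum_tmul_counit_eq (R := k) (ℛ k b)
  apply_fun (TensorProduct.rid k B) at h
  simp only [map_sum, TensorProduct.rid_tmul, one_smul] at h
  rw [conv_repr f cunit b (ℛ k b)]
  simp only [cunit, LinearMap.coe_comp, Function.comp_apply, Algebra.linearMap_apply]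
  calc ∑ j ∈ (ℛ k b).index, f ((ℛ k b).left j) * algebraMap k D (Coalgebra.counit ((ℛ k b).right j))
      = ∑ j ∈ (ℛ k b).index, f (Coalgebra.counit (R := k) ((ℛ k b).right j) • (ℛ k b).left j) := by
        refine Finset.sum_congr rfl fun j _ => ?_
        rw [map_smul, Algebra.smul_def, ← Algebra.commutes]
    _ = f b := by rw [← map_sum, h]

lemma conv_cunit_left (f : B →ₗ[k] D) : conv cunit f = f := by
  ext b
  have h := Coalgebra.sum_counit_tmul_eq (R := k) (ℛ k b)
  apply_fun (TensorProduct.lid k B) at h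
  simp only [map_sum, TensorProduct.lid_tmul, one_smul] at h
  rw [conv_repr cunit f b (ℛ k b)]
  simp only [cunit, LinearMap.coe_comp, Function.comp_apply, Algebra.linearMap_apply]
  calc ∑ j ∈ (ℛ k b).index, algebraMap k D (Coalgebra.counit ((ℛ k b).left j)) * f ((ℛ k b).right j)
      = ∑ j ∈ (ℛ k b).index, f (Coalgebra.counit (R := k) ((ℛ k b).left j) • (ℛ k b).right j) := by
        refine Finset.sum_congr rfl fun j _ => ?_
        rw [map_smul, Algebra.smul_def]
    _ = f b := by rw [← map_sum, h]

lemma conv_assoc (f g h : B →ₗ[k] D) : conv (conv f g) h = conv f (conv g h) := by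
  ext b
  set r := ℛ k b with hr
  set r₁ : (j : B × B) → Coalgebra.Repr k (r.left j) (B × B) := fun j => ℛ k (r.left j) with hr₁
  set r₂ : (j : B × B) → Coalgebra.Repr k (r.right j) (B × B) := fun j => ℛ k (r.right j) with hr₂
  have key := Coalgebra.sum_tmul_tmul_eq (R := k) r r₁ r₂
  apply_fun (LinearMap.mul' k D ∘ₗ
    TensorProduct.map f (LinearMap.mul' k D ∘ₗ TensorProduct.map g h)) at key
  simp only [map_sum, LinearMap.coe_comp, Function.comp_apply, TensorProduct.map_tmul,
    LinearMap.mul'_apply] at key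
  rw [conv_repr (conv f g) h b r, conv_repr f (conv g h) b r]
  calc ∑ j ∈ r.index, conv f g (r.left j) * h (r.right j)
      = ∑ j ∈ r.index, ∑ m ∈ (r₁ j).index,
          f ((r₁ j).left m) * (g ((r₁ j).right m) * h (r.right j)) := by
        refine Finset.sum_congr rfl fun j _ => ?_
        rw [conv_repr f g _ (r₁ j), Finset.sum_mul]
        simp [mul_assoc]
    _ = ∑ j ∈ r.index, ∑ m ∈ (r₂ j).index,
          f (r.left j) * (g ((r₂ j).left m) * h ((r₂ j).right m)) := key
    _ = ∑ j ∈ r.index, f (r.left j) * conv g h (r.right j) := by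
        refine Finset.sum_congr rfl fun j _ => ?_
        rw [conv_repr g h _ (r₂ j), Finset.mul_sum]

/-- Postcomposition with a multiplicative linear map distributes over convolution. -/
lemma comp_conv (ψ : D →ₗ[k] D') (hψ : ∀ x y : D, ψ (x * y) = ψ x * ψ y)
    (f g : B →ₗ[k] D) : ψ ∘ₗ conv f g = conv (ψ ∘ₗ f) (ψ ∘ₗ g) := by
  ext b
  rw [LinearMap.comp_apply, conv_repr f g b (ℛ k b), conv_repr _ _ b (ℛ k b), map_sum]
  exact Finset.sum_congr rfl fun j _ => hψ _ _

lemma comp_cunit (ψ : D →ₗ[k] D') (hψ : ψ 1 = 1) :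
    ψ ∘ₗ (cunit : B →ₗ[k] D) = cunit := by
  ext b
  simp [cunit, Algebra.algebraMap_eq_smul_one, hψ]

/-- Precomposition with a coalgebra-morphism-like linear map. -/
lemma conv_comp (φ : B →ₗ[k] B)
    (hφ : (Coalgebra.comul : B →ₗ[k] B ⊗[k] B) ∘ₗ φ = TensorProduct.map φ φ ∘ₗ Coalgebra.comul)
    (f g : B →ₗ[k] D) : conv f g ∘ₗ φ = conv (f ∘ₗ φ) (g ∘ₗ φ) := by
  unfold conv
  rw [LinearMap.comp_assoc, LinearMap.comp_assoc, hφ, TensorProduct.map_comp]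
  rw [LinearMap.comp_assoc]

lemma cunit_comp (φ : B →ₗ[k] B)
    (hφ : (Coalgebra.counit : B →ₗ[k] k) ∘ₗ φ = Coalgebra.counit) :
    (cunit : B →ₗ[k] D) ∘ₗ φ = cunit := by
  unfold cunit
  rw [LinearMap.comp_assoc, hφ]

lemma conv_inv_unique {f g h : B →ₗ[k] D} (hfg : conv f g = cunit) (hhf : conv h f = cunit) :
    g = h := by
  have := conv_assoc h f g
  rw [hfg, hhf, conv_cunit_left, conv_cunit_right] at this
  exact this

open HopfAlgebra in
lemma conv_id_antipode : conv (LinearMap.id : B →ₗ[k] B) (antipode k) = cunit := by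
  have h : TensorProduct.map (LinearMap.id : B →ₗ[k] B) (antipode k : B →ₗ[k] B) =
      LinearMap.lTensor B (antipode k) := rfl
  unfold conv cunit
  rw [h, mul_antipode_lTensor_comul]

open HopfAlgebra in
lemma conv_antipode_id : conv (antipode k : B →ₗ[k] B) LinearMap.id = cunit := by
  have h : TensorProduct.map (antipode k : B →ₗ[k] B) (LinearMap.id : B →ₗ[k] B) =
      LinearMap.rTensor B (antipode k) := rfl
  unfold conv cunit
  rw [h, mul_antipode_rTensor_comul]


open HopfAlgebra

/-- `x ↦ x ⊗ 1`. -/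
def inL : B →ₗ[k] B ⊗[k] B := (TensorProduct.mk k B B).flip 1
/-- `x ↦ 1 ⊗ x`. -/
def inR : B →ₗ[k] B ⊗[k] B := TensorProduct.mk k B B 1

@[simp] lemma inL_apply (x : B) : (inL : B →ₗ[k] B ⊗[k] B) x = x ⊗ₜ 1 := rfl
@[simp] lemma inR_apply (x : B) : (inR : B →ₗ[k] B ⊗[k] B) x = 1 ⊗ₜ x := rfl

lemma inL_mul (x y : B) : (inL : B →ₗ[k] B ⊗[k] B) (x * y) = inL x * inL y := by
  simp [Algebra.TensorProduct.tmul_mul_tmul]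

lemma inR_mul (x y : B) : (inR : B →ₗ[k] B ⊗[k] B) (x * y) = inR x * inR y := by
  simp [Algebra.TensorProduct.tmul_mul_tmul]

lemma inL_one : (inL : B →ₗ[k] B ⊗[k] B) 1 = 1 := by
  simp [Algebra.TensorProduct.one_def]

lemma inR_one : (inR : B →ₗ[k] B ⊗[k] B) 1 = 1 := by
  simp [Algebra.TensorProduct.one_def]

lemma D1 (f g : B →ₗ[k] B) :
    conv (inL ∘ₗ f) (inR ∘ₗ g) = TensorProduct.map f g ∘ₗ (Coalgebra.comul : B →ₗ[k] B ⊗[k] B) := by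
  ext b
  rw [conv_repr _ _ b (ℛ k b), LinearMap.comp_apply, ← (ℛ k b).eq, map_sum]
  simp [Algebra.TensorProduct.tmul_mul_tmul]

lemma D2 (f g : B →ₗ[k] B) :
    conv (inR ∘ₗ g) (inL ∘ₗ f) = (TensorProduct.comm k B B).toLinearMap ∘ₗ
      TensorProduct.map g f ∘ₗ (Coalgebra.comul : B →ₗ[k] B ⊗[k] B) := by
  ext b
  rw [conv_repr _ _ b (ℛ k b), LinearMap.comp_apply, LinearMap.comp_apply, ← (ℛ k b).eq, map_sum,
    map_sum]
  simp [Algebra.TensorProduct.tmul_mul_tmul]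

lemma comul_decomp : conv (inL : B →ₗ[k] B ⊗[k] B) inR = Coalgebra.comul := by
  have := D1 (LinearMap.id : B →ₗ[k] B) LinearMap.id
  rwa [LinearMap.comp_id, LinearMap.comp_id, TensorProduct.map_id, LinearMap.id_comp] at this

lemma conv_comp_antipode_id_of_mul (ψ : B →ₗ[k] D) (hψ : ∀ x y : B, ψ (x * y) = ψ x * ψ y)
    (hψ1 : ψ 1 = 1) : conv (ψ ∘ₗ (antipode k)) ψ = cunit := by
  have h := comp_conv ψ hψ (antipode k) LinearMap.id
  rw [conv_antipode_id, comp_cunit ψ hψ1, LinearMap.comp_id] at h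
  exact h.symm

lemma conv_comp_id_antipode_of_mul (ψ : B →ₗ[k] D) (hψ : ∀ x y : B, ψ (x * y) = ψ x * ψ y)
    (hψ1 : ψ 1 = 1) : conv ψ (ψ ∘ₗ (antipode k)) = cunit := by
  have h := comp_conv ψ hψ LinearMap.id (antipode k)
  rw [conv_id_antipode, comp_cunit ψ hψ1, LinearMap.comp_id] at h
  exact h.symm

/-- The (antipode k) is anti-comultiplicative. -/
lemma comul_antipode :
    (Coalgebra.comul : B →ₗ[k] B ⊗[k] B) ∘ₗ (antipode k) =
      (TensorProduct.comm k B B).toLinearMap ∘ₗ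
        TensorProduct.map (antipode k) (antipode k) ∘ₗ Coalgebra.comul := by
  refine conv_inv_unique (f := (Coalgebra.comul : B →ₗ[k] B ⊗[k] B)) ?_ ?_
  · exact conv_comp_id_antipode_of_mul _ (fun x y => Bialgebra.comul_mul x y) Bialgebra.comul_one
  · rw [← D2 (antipode k : B →ₗ[k] B) (antipode k), ← comul_decomp, conv_assoc,
      ← conv_assoc (inL ∘ₗ (antipode k : B →ₗ[k] B)) inL inR,
      conv_comp_antipode_id_of_mul (inL : B →ₗ[k] B ⊗[k] B) inL_mul inL_one, conv_cunit_left]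
    exact conv_comp_antipode_id_of_mul (inR : B →ₗ[k] B ⊗[k] B) inR_mul inR_one

section Pi

variable (S : B →ₗ[k] B) (πl : B →ₗ[k] B)

/-- Multiplicativity of `map f g` on the tensor square. -/
lemma map_mul_tensor (f g : B →ₗ[k] B) (hf : ∀ x y, f (x * y) = f x * f y)
    (hg : ∀ x y, g (x * y) = g x * g y) (u v : B ⊗[k] B) :
    TensorProduct.map f g (u * v) = TensorProduct.map f g u * TensorProduct.map f g v := by
  induction u using TensorProduct.induction_on with
  | zero => simp
  | tmul x₁ y₁ =>
    induction v using TensorProduct.induction_on with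
    | zero => simp
    | tmul x₂ y₂ => simp [Algebra.TensorProduct.tmul_mul_tmul, hf, hg]
    | add u w hu hw => simp only [mul_add, map_add, hu, hw]
  | add u w hu hw => simp only [add_mul, map_add, hu, hw]

variable (hmul : ∀ x y : B, πl (x * y) = πl x * πl y) (hone : πl 1 = 1)
variable (hcom : (Coalgebra.comul : B →ₗ[k] B ⊗[k] B) ∘ₗ πl
    = TensorProduct.map πl πl ∘ₗ Coalgebra.comul)
variable (hcou : (Coalgebra.counit : B →ₗ[k] k) ∘ₗ πl = Coalgebra.counit)
variable (hidem : πl ∘ₗ πl = πl)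

include hmul hone in
lemma conv_pi_right : conv πl (πl ∘ₗ (antipode k)) = cunit :=
  conv_comp_id_antipode_of_mul πl hmul hone

include hcom hcou in
lemma conv_pi_inv : conv πl (antipode k ∘ₗ πl) = cunit := by
  have h := conv_comp πl hcom LinearMap.id (antipode k)
  rw [conv_id_antipode, cunit_comp πl hcou, LinearMap.id_comp] at h
  exact h.symm

include hcom hcou in
lemma conv_inv_pi : conv (antipode k ∘ₗ πl) πl = cunit := by
  have h := conv_comp πl hcom (antipode k) LinearMap.id
  rw [conv_antipode_id, cunit_comp πl hcou, LinearMap.id_comp] at h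
  exact h.symm

include hmul hone hcom hcou in
lemma pi_antipode_comm : πl ∘ₗ (antipode k) = (antipode k) ∘ₗ πl :=
  conv_inv_unique (conv_pi_right πl hmul hone) (conv_inv_pi πl hcom hcou)

include hmul hone hcom hcou hidem in
lemma pi_comp_Spi : πl ∘ₗ (antipode k ∘ₗ πl) = (antipode k) ∘ₗ πl := by
  rw [← LinearMap.comp_assoc, pi_antipode_comm πl hmul hone hcom hcou,
    LinearMap.comp_assoc, hidem]

include hidem in
lemma Spi_comp_pi : (antipode k ∘ₗ πl) ∘ₗ πl = (antipode k) ∘ₗ πl := by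
  rw [LinearMap.comp_assoc, hidem]

omit hmul hone hcou hidem in
include hcom in
lemma comul_Spi :
    (Coalgebra.comul : B →ₗ[k] B ⊗[k] B) ∘ₗ (antipode k ∘ₗ πl) =
      (TensorProduct.comm k B B).toLinearMap ∘ₗ
        TensorProduct.map (antipode k ∘ₗ πl) (antipode k ∘ₗ πl) ∘ₗ Coalgebra.comul := by
  calc (Coalgebra.comul : B →ₗ[k] B ⊗[k] B) ∘ₗ (antipode k ∘ₗ πl)
      = ((Coalgebra.comul : B →ₗ[k] B ⊗[k] B) ∘ₗ (antipode k)) ∘ₗ πl := by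
        rw [LinearMap.comp_assoc]
    _ = (TensorProduct.comm k B B).toLinearMap ∘ₗ
          TensorProduct.map (antipode k) (antipode k) ∘ₗ (Coalgebra.comul ∘ₗ πl) := by
        rw [comul_antipode]
        simp only [LinearMap.comp_assoc]
    _ = (TensorProduct.comm k B B).toLinearMap ∘ₗ
          (TensorProduct.map (antipode k) (antipode k) ∘ₗ TensorProduct.map πl πl) ∘ₗ
            Coalgebra.comul := by
        rw [hcom]
        simp only [LinearMap.comp_assoc]
    _ = (TensorProduct.comm k B B).toLinearMap ∘ₗ
          TensorProduct.map (antipode k ∘ₗ πl) (antipode k ∘ₗ πl) ∘ₗ Coalgebra.comul := by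
        rw [← TensorProduct.map_comp]

/-- `Θ = (id ⊗ π) ∘ Δ`. -/
def Theta : B →ₗ[k] B ⊗[k] B := TensorProduct.map LinearMap.id πl ∘ₗ Coalgebra.comul

lemma Theta_decomp : Theta πl = conv inL (inR ∘ₗ πl) := by
  rw [Theta, ← D1 LinearMap.id πl, LinearMap.comp_id]

include hmul in
lemma Theta_mul (x y : B) : Theta πl (x * y) = Theta πl x * Theta πl y := by
  simp only [Theta, LinearMap.comp_apply, Bialgebra.comul_mul]
  exact map_mul_tensor _ _ (fun _ _ => rfl) hmul _ _

include hmul hone hcom hcou hidem in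
lemma Theta_comp_Spi :
    Theta πl ∘ₗ (antipode k ∘ₗ πl) = conv (inR ∘ₗ (antipode k ∘ₗ πl)) (inL ∘ₗ (antipode k ∘ₗ πl)) := by
  have hnat : TensorProduct.map (LinearMap.id : B →ₗ[k] B) πl ∘ₗ
      (TensorProduct.comm k B B).toLinearMap =
      (TensorProduct.comm k B B).toLinearMap ∘ₗ TensorProduct.map πl LinearMap.id := by
    apply TensorProduct.ext'
    intro x y
    simp
  calc Theta πl ∘ₗ (antipode k ∘ₗ πl)
      = TensorProduct.map LinearMap.id πl ∘ₗ (Coalgebra.comul ∘ₗ (antipode k ∘ₗ πl)) := by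
        rw [Theta, LinearMap.comp_assoc]
    _ = (TensorProduct.map LinearMap.id πl ∘ₗ (TensorProduct.comm k B B).toLinearMap) ∘ₗ
          TensorProduct.map (antipode k ∘ₗ πl) (antipode k ∘ₗ πl) ∘ₗ Coalgebra.comul := by
        rw [comul_Spi πl hcom]
        simp only [LinearMap.comp_assoc]
    _ = (TensorProduct.comm k B B).toLinearMap ∘ₗ
          (TensorProduct.map πl LinearMap.id ∘ₗ
            TensorProduct.map (antipode k ∘ₗ πl) (antipode k ∘ₗ πl)) ∘ₗ Coalgebra.comul := by
        rw [hnat]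
        simp only [LinearMap.comp_assoc]
    _ = (TensorProduct.comm k B B).toLinearMap ∘ₗ
          TensorProduct.map (antipode k ∘ₗ πl) (antipode k ∘ₗ πl) ∘ₗ Coalgebra.comul := by
        rw [← TensorProduct.map_comp, pi_comp_Spi πl hmul hone hcom hcou hidem,
          LinearMap.id_comp]
    _ = conv (inR ∘ₗ (antipode k ∘ₗ πl)) (inL ∘ₗ (antipode k ∘ₗ πl)) := (D2 _ _).symm

include hmul hone hcom hcou hidem in
lemma Theta_comp_Pi :
    Theta πl ∘ₗ conv LinearMap.id (antipode k ∘ₗ πl) =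
      inL ∘ₗ conv LinearMap.id (antipode k ∘ₗ πl) := by
  have hR : conv (inR ∘ₗ πl) (inR ∘ₗ (antipode k ∘ₗ πl)) = cunit := by
    have h := comp_conv (inR : B →ₗ[k] B ⊗[k] B) inR_mul πl (antipode k ∘ₗ πl)
    rw [conv_pi_inv πl hcom hcou, comp_cunit (inR : B →ₗ[k] B ⊗[k] B) inR_one] at h
    exact h.symm
  calc Theta πl ∘ₗ conv LinearMap.id (antipode k ∘ₗ πl)
      = conv (Theta πl) (Theta πl ∘ₗ (antipode k ∘ₗ πl)) := by
        have h := comp_conv (Theta πl) (Theta_mul πl hmul) LinearMap.id (antipode k ∘ₗ πl)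
        rwa [LinearMap.comp_id] at h
    _ = conv (conv inL (inR ∘ₗ πl))
          (conv (inR ∘ₗ (antipode k ∘ₗ πl)) (inL ∘ₗ (antipode k ∘ₗ πl))) := by
        rw [Theta_comp_Spi πl hmul hone hcom hcou hidem, Theta_decomp]
    _ = conv inL (conv (conv (inR ∘ₗ πl) (inR ∘ₗ (antipode k ∘ₗ πl))) (inL ∘ₗ (antipode k ∘ₗ πl))) := by
        rw [conv_assoc, conv_assoc]
    _ = conv inL (inL ∘ₗ (antipode k ∘ₗ πl)) := by rw [hR, conv_cunit_left]
    _ = inL ∘ₗ conv LinearMap.id (antipode k ∘ₗ πl) := by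
        have h := comp_conv (inL : B →ₗ[k] B ⊗[k] B) inL_mul LinearMap.id (antipode k ∘ₗ πl)
        rw [LinearMap.comp_id] at h
        exact h.symm

end Pi

lemma antipode_one : (antipode k : B →ₗ[k] B) 1 = 1 := by
  have h := mul_antipode_lTensor_comul_apply (R := k) (A := B) 1
  simpa [Algebra.TensorProduct.one_def] using h

end Stmt3Aux


/-- For a split pair of Hopf algebras `(A, B, i, p)` with `π = i ∘ p` and
`Π = m ∘ (id ⊗ (S ∘ π)) ∘ Δ`, the map `Π` is an idempotent and `Π ∘ π = ι ∘ ε = π ∘ Π`. -/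
theorem statement3 (i : A →ₐc[k] B) (p : B →ₐc[k] A) (hsplit : ∀ a : A, p (i a) = a) :
    PiMap i p ∘ₗ PiMap i p = PiMap i p ∧
    PiMap i p ∘ₗ piMap i p =
      Algebra.linearMap k B ∘ₗ (Coalgebra.counit : B →ₗ[k] k) ∧
    piMap i p ∘ₗ PiMap i p =
      Algebra.linearMap k B ∘ₗ (Coalgebra.counit : B →ₗ[k] k) := by
  have hmul : ∀ x y : B, piMap i p (x * y) = piMap i p x * piMap i p y := by
    intro x y
    show i (p (x * y)) = i (p x) * i (p y)
    simp [map_mul]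
  have hone : piMap i p 1 = 1 := by
    show i (p 1) = 1
    simp
  have hπco : ((i.comp p : B →ₐc[k] B) : B →ₗ[k] B) = piMap i p := by
    ext b
    show (i.comp p) b = i (p b)
    simp [BialgHom.coe_comp]
  have hcom : (Coalgebra.comul : B →ₗ[k] B ⊗[k] B) ∘ₗ piMap i p =
      TensorProduct.map (piMap i p) (piMap i p) ∘ₗ Coalgebra.comul := by
    rw [← hπco]; exact (CoalgHomClass.map_comp_comul (i.comp p)).symm
  have hcou : (Coalgebra.counit : B →ₗ[k] k) ∘ₗ piMap i p = Coalgebra.counit := by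
    rw [← hπco]; exact CoalgHomClass.counit_comp (i.comp p)
  have hidem : piMap i p ∘ₗ piMap i p = piMap i p := by
    ext b
    show i (p (i (p b))) = i (p b)
    rw [hsplit]
  have hPi : PiMap i p =
      Stmt3Aux.conv LinearMap.id (HopfAlgebra.antipode k ∘ₗ piMap i p) := rfl
  have hSpi_pi : (HopfAlgebra.antipode k ∘ₗ piMap i p) ∘ₗ piMap i p =
      HopfAlgebra.antipode k ∘ₗ piMap i p := Stmt3Aux.Spi_comp_pi _ hidem
  refine ⟨?_, ?_, ?_⟩
  · -- idempotency
    have hsplitmap : TensorProduct.map (LinearMap.id : B →ₗ[k] B)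
        (HopfAlgebra.antipode k ∘ₗ piMap i p) =
        TensorProduct.map LinearMap.id (HopfAlgebra.antipode k) ∘ₗ
          TensorProduct.map LinearMap.id (piMap i p) := by
      rw [← TensorProduct.map_comp, LinearMap.id_comp]
    rw [hPi]
    apply LinearMap.ext
    intro b
    have h1 := LinearMap.congr_fun
      (Stmt3Aux.Theta_comp_Pi (piMap i p) hmul hone hcom hcou hidem) b
    simp only [LinearMap.comp_apply, Stmt3Aux.Theta, Stmt3Aux.inL_apply] at h1
    simp only [LinearMap.comp_apply, Stmt3Aux.conv] at h1 ⊢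
    rw [hsplitmap] at h1 ⊢
    rw [LinearMap.comp_apply, h1]
    simp [Stmt3Aux.antipode_one]
  · -- Π ∘ π = ι ∘ ε
    have h := Stmt3Aux.conv_comp (piMap i p) hcom LinearMap.id
      (HopfAlgebra.antipode k ∘ₗ piMap i p)
    rw [LinearMap.id_comp, hSpi_pi] at h
    rw [hPi, h]
    exact Stmt3Aux.conv_pi_inv _ hcom hcou
  · -- π ∘ Π = ι ∘ ε
    have h := Stmt3Aux.comp_conv (piMap i p) hmul LinearMap.id
      (HopfAlgebra.antipode k ∘ₗ piMap i p)
    rw [LinearMap.comp_id,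
      Stmt3Aux.pi_comp_Spi (piMap i p) hmul hone hcom hcou hidem] at h
    rw [hPi, h]
    exact Stmt3Aux.conv_pi_inv _ hcom hcou
end
end

section
/- Let (A, B, i, p) be a split pair of Hopf algebras, with π, Π, L as in the context. Then for all b, b' ∈ B: (1) Π(b · b') = Σ b₍₁₎ · Π(b') · S(π(b₍₂₎)); (2) Π(b · π(b')) = ε(b') Π(b). Consequently the formula b ▷ x := Σ b₍₁₎ · x · S(π(b₍₂₎)) maps B ⊗ L into L (i.e. Π(b ▷ x) = b ▷ x whenever Π(x) = x) and defines a left B-module structure on L: (b b') ▷ x = b ▷ (b' ▷ x) and 1 ▷ x = x. -/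
open TensorProduct

noncomputable section

variable {k : Type} [Field k]
variable {A : Type} [Ring A] [HopfAlgebra k A]
variable {B : Type} [Ring B] [HopfAlgebra k B]

/-- The adjoint-type action `b ⊗ x ↦ b ▷ x = Σ b₍₁₎ · x · S(π(b₍₂₎))` of `B` on itself,
as a linear map `B ⊗ B → B`. -/
def adActT (i : A →ₐc[k] B) (p : B →ₐc[k] A) : B ⊗[k] B →ₗ[k] B :=
  LinearMap.mul' k B ∘ₗ
  LinearMap.rTensor B (LinearMap.mul' k B) ∘ₗ
  (TensorProduct.assoc k B B B).symm.toLinearMap ∘ₗ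
  LinearMap.lTensor B (TensorProduct.comm k B B).toLinearMap ∘ₗ
  (TensorProduct.assoc k B B B).toLinearMap ∘ₗ
  LinearMap.rTensor B
    (LinearMap.lTensor B (HopfAlgebra.antipode k ∘ₗ piMap i p) ∘ₗ
      (Coalgebra.comul : B →ₗ[k] B ⊗[k] B))

namespace Statement5Aux

open Coalgebra HopfAlgebra

/-! ### Generalities: counit collapse and uniqueness of convolution inverses -/

lemma sum_counit_smul_left {C : Type} [AddCommGroup C] [Module k C] [Coalgebra k C]
    {c : C} {ι : Type*} (r : Repr k c ι) :
    ∑ j ∈ r.index, counit (R := k) (r.right j) • r.left j = c := by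
  have h := Coalgebra.sum_tmul_counit_eq r
  apply_fun (TensorProduct.rid k C) at h
  simp only [map_sum, TensorProduct.rid_tmul, one_smul] at h
  exact h

lemma sum_counit_smul_right {C : Type} [AddCommGroup C] [Module k C] [Coalgebra k C]
    {c : C} {ι : Type*} (r : Repr k c ι) :
    ∑ j ∈ r.index, counit (R := k) (r.left j) • r.right j = c := by
  have h := Coalgebra.sum_counit_tmul_eq r
  apply_fun (TensorProduct.lid k C) at h
  simp only [map_sum, TensorProduct.lid_tmul, one_smul] at h
  exact h

lemma conv_unique {C : Type} [AddCommGroup C] [Module k C] [Coalgebra k C]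
    (N M T : C →ₗ[k] B)
    (h1 : ∀ c : C, LinearMap.mul' k B (TensorProduct.map N M (Coalgebra.comul c))
      = Coalgebra.counit (R := k) c • 1)
    (h2 : ∀ c : C, LinearMap.mul' k B (TensorProduct.map M T (Coalgebra.comul c))
      = Coalgebra.counit (R := k) c • 1) :
    N = T := by
  have inner1 : ∀ x : C, ∑ j ∈ (ℛ k x).index,
      N ((ℛ k x).left j) * M ((ℛ k x).right j) = counit (R := k) x • 1 := by
    intro x
    have h := h1 x
    rw [← (ℛ k x).eq] at h
    simpa [map_sum] using h
  have inner2 : ∀ x : C, ∑ j ∈ (ℛ k x).index,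
      M ((ℛ k x).left j) * T ((ℛ k x).right j) = counit (R := k) x • 1 := by
    intro x
    have h := h2 x
    rw [← (ℛ k x).eq] at h
    simpa [map_sum] using h
  ext c
  have key := Coalgebra.sum_map_tmul_tmul_eq (R := k) N M T c (repr := ℛ k c)
    (a₁ := fun i => ℛ k ((ℛ k c).left i)) (a₂ := fun i => ℛ k ((ℛ k c).right i))
  apply_fun (LinearMap.mul' k B ∘ₗ LinearMap.lTensor B (LinearMap.mul' k B)) at key
  simp only [map_sum, LinearMap.comp_apply, LinearMap.lTensor_tmul,
    LinearMap.mul'_apply] at key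
  have lhs : ∑ i ∈ (ℛ k c).index, ∑ j ∈ (ℛ k ((ℛ k c).right i)).index,
      N ((ℛ k c).left i) * (M ((ℛ k ((ℛ k c).right i)).left j)
        * T ((ℛ k ((ℛ k c).right i)).right j)) = N c := by
    calc ∑ i ∈ (ℛ k c).index, ∑ j ∈ (ℛ k ((ℛ k c).right i)).index,
        N ((ℛ k c).left i) * (M ((ℛ k ((ℛ k c).right i)).left j)
          * T ((ℛ k ((ℛ k c).right i)).right j))
        = ∑ i ∈ (ℛ k c).index,
            N ((ℛ k c).left i) * (counit (R := k) ((ℛ k c).right i) • 1) := by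
          refine Finset.sum_congr rfl fun i _ => ?_
          rw [← Finset.mul_sum, inner2]
      _ = ∑ i ∈ (ℛ k c).index,
            N (counit (R := k) ((ℛ k c).right i) • (ℛ k c).left i) := by
          simp [mul_smul_comm]
      _ = N c := by rw [← map_sum, sum_counit_smul_left]
  have rhs : ∑ i ∈ (ℛ k c).index, ∑ j ∈ (ℛ k ((ℛ k c).left i)).index,
      N ((ℛ k ((ℛ k c).left i)).left j) * (M ((ℛ k ((ℛ k c).left i)).right j)
        * T ((ℛ k c).right i)) = T c := by
    calc ∑ i ∈ (ℛ k c).index, ∑ j ∈ (ℛ k ((ℛ k c).left i)).index,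
        N ((ℛ k ((ℛ k c).left i)).left j) * (M ((ℛ k ((ℛ k c).left i)).right j)
          * T ((ℛ k c).right i))
        = ∑ i ∈ (ℛ k c).index,
            (counit (R := k) ((ℛ k c).left i) • 1) * T ((ℛ k c).right i) := by
          refine Finset.sum_congr rfl fun i _ => ?_
          simp_rw [← mul_assoc]
          rw [← Finset.sum_mul, inner1]
      _ = ∑ i ∈ (ℛ k c).index,
            T (counit (R := k) ((ℛ k c).left i) • (ℛ k c).right i) := by
          simp [smul_mul_assoc]
      _ = T c := by rw [← map_sum, sum_counit_smul_right]
  exact lhs ▸ rhs ▸ key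

/-! ### Properties of the antipode -/

lemma antipode_one : HopfAlgebra.antipode (R := k) (1 : B) = 1 := by
  have := mul_antipode_rTensor_comul_apply (R := k) (a := (1 : B))
  simpa [Algebra.TensorProduct.one_def] using this

lemma comul_tmul_repr (a b : B) :
    Coalgebra.comul (R := k) (a ⊗ₜ[k] b) =
      ∑ x ∈ (ℛ k a).index, ∑ y ∈ (ℛ k b).index,
        ((ℛ k a).left x ⊗ₜ[k] (ℛ k b).left y) ⊗ₜ[k]
          ((ℛ k a).right x ⊗ₜ[k] (ℛ k b).right y) := by
  rw [TensorProduct.comul_tmul]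
  rw [← (ℛ k a).eq, ← (ℛ k b).eq, TensorProduct.sum_tmul]
  simp [TensorProduct.tmul_sum, map_sum]

lemma comul_mul_repr' {a b : B} {ι κ : Type*} (ra : Repr k a ι) (rb : Repr k b κ) :
    Coalgebra.comul (R := k) (a * b) =
      ∑ x ∈ ra.index, ∑ y ∈ rb.index,
        (ra.left x * rb.left y) ⊗ₜ[k] (ra.right x * rb.right y) := by
  rw [Bialgebra.comul_mul, ← ra.eq, ← rb.eq, Finset.sum_mul_sum]
  simp [Algebra.TensorProduct.tmul_mul_tmul]

/-- Product of two comultiplication representations. -/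
def reprMul {a b : B} {ι κ : Type*} (ra : Repr k a ι) (rb : Repr k b κ) :
    Repr k (a * b) (ι × κ) where
  index := ra.index ×ˢ rb.index
  left := fun j => ra.left j.1 * rb.left j.2
  right := fun j => ra.right j.1 * rb.right j.2
  eq := by rw [Finset.sum_product, comul_mul_repr' ra rb]

/-- A representation of `comul 1`. -/
def reprOne : Repr k (1 : B) ℕ where
  index := ({0} : Finset ℕ)
  left := fun _ => 1
  right := fun _ => 1
  eq := by simp [Algebra.TensorProduct.one_def]

lemma counit_tmul (a b : B) : Coalgebra.counit (R := k) (a ⊗ₜ[k] b)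
    = Coalgebra.counit (R := k) a * Coalgebra.counit (R := k) b := by
  rw [TensorProduct.counit_tmul, smul_eq_mul, mul_comm]

lemma antipode_mul (a b : B) :
    HopfAlgebra.antipode (R := k) (a * b)
      = HopfAlgebra.antipode (R := k) b * HopfAlgebra.antipode (R := k) a := by
  set S : B →ₗ[k] B := HopfAlgebra.antipode (R := k) with hS
  set N : B ⊗[k] B →ₗ[k] B := S ∘ₗ LinearMap.mul' k B with hN
  set M : B ⊗[k] B →ₗ[k] B := LinearMap.mul' k B with hM
  set T : B ⊗[k] B →ₗ[k] B :=
    LinearMap.mul' k B ∘ₗ TensorProduct.map S S ∘ₗ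
      (TensorProduct.comm k B B).toLinearMap with hT
  have h1 : (LinearMap.mul' k B) ∘ₗ TensorProduct.map N M ∘ₗ
      (Coalgebra.comul (R := k) (A := B ⊗[k] B))
      = (LinearMap.toSpanSingleton k B 1) ∘ₗ Coalgebra.counit (R := k) := by
    apply TensorProduct.ext'
    intro a b
    simp only [LinearMap.comp_apply, LinearMap.toSpanSingleton_apply]
    rw [comul_tmul_repr, counit_tmul]
    simp only [map_sum, TensorProduct.map_tmul, LinearMap.mul'_apply, hN, hM,
      LinearMap.comp_apply]
    have key := mul_antipode_rTensor_comul_apply (R := k) (a := a * b)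
    rw [comul_mul_repr' (ℛ k a) (ℛ k b)] at key
    simp only [map_sum, LinearMap.rTensor_tmul, LinearMap.mul'_apply] at key
    rw [key, Algebra.algebraMap_eq_smul_one, Bialgebra.counit_mul]
  have h2 : (LinearMap.mul' k B) ∘ₗ TensorProduct.map M T ∘ₗ
      (Coalgebra.comul (R := k) (A := B ⊗[k] B))
      = (LinearMap.toSpanSingleton k B 1) ∘ₗ Coalgebra.counit (R := k) := by
    apply TensorProduct.ext'
    intro a b
    simp only [LinearMap.comp_apply, LinearMap.toSpanSingleton_apply]
    rw [comul_tmul_repr, counit_tmul]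
    simp only [map_sum, TensorProduct.map_tmul, LinearMap.mul'_apply, hN, hM, hT,
      LinearMap.comp_apply, LinearEquiv.coe_coe, TensorProduct.comm_tmul]
    calc ∑ x ∈ (ℛ k a).index, ∑ y ∈ (ℛ k b).index,
          (ℛ k a).left x * (ℛ k b).left y *
            (S ((ℛ k b).right y) * S ((ℛ k a).right x))
        = ∑ x ∈ (ℛ k a).index, (ℛ k a).left x *
            ((∑ y ∈ (ℛ k b).index, (ℛ k b).left y * S ((ℛ k b).right y)) *
              S ((ℛ k a).right x)) := by
          refine Finset.sum_congr rfl fun x _ => ?_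
          rw [Finset.sum_mul, Finset.mul_sum]
          exact Finset.sum_congr rfl fun y _ => by rw [mul_assoc, mul_assoc]
      _ = Coalgebra.counit (R := k) b •
            ∑ x ∈ (ℛ k a).index, (ℛ k a).left x * S ((ℛ k a).right x) := by
          rw [sum_mul_antipode_eq_smul (ℛ k b), Finset.smul_sum]
          refine Finset.sum_congr rfl fun x _ => ?_
          rw [smul_mul_assoc, one_mul, mul_smul_comm]
      _ = (Coalgebra.counit (R := k) a * Coalgebra.counit (R := k) b) • 1 := by
          rw [sum_mul_antipode_eq_smul (ℛ k a), smul_smul, mul_comm]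
  have heq := conv_unique N M T
    (fun c => by simpa using LinearMap.congr_fun h1 c)
    (fun c => by simpa using LinearMap.congr_fun h2 c)
  have := LinearMap.congr_fun heq (a ⊗ₜ[k] b)
  simpa [hN, hM, hT] using this

lemma counit_antipode (a : B) :
    Coalgebra.counit (R := k) (HopfAlgebra.antipode (R := k) a)
      = Coalgebra.counit (R := k) a := by
  have h := sum_mul_antipode_eq_smul (ℛ k a)
  apply_fun (Coalgebra.counit (R := k)) at h
  simp only [map_sum, map_smul, Bialgebra.counit_mul, Bialgebra.counit_one,
    smul_eq_mul, mul_one] at h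
  rw [← h]
  conv_lhs => rw [← sum_counit_smul_right (ℛ k a)]
  simp [smul_eq_mul]

lemma antipode_comp_bialgHom (f : A →ₐc[k] B) (a : A) :
    HopfAlgebra.antipode (R := k) (f a) = f (HopfAlgebra.antipode (R := k) a) := by
  have h1 : ∀ c : A, LinearMap.mul' k B (TensorProduct.map
      ((HopfAlgebra.antipode (R := k) (A := B)) ∘ₗ f.toLinearMap) f.toLinearMap
      (Coalgebra.comul c)) = Coalgebra.counit (R := k) c • 1 := by
    intro c
    rw [← (ℛ k c).eq]
    simp only [map_sum, TensorProduct.map_tmul, LinearMap.mul'_apply,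
      LinearMap.comp_apply]
    have key := sum_antipode_mul_eq_smul ((ℛ k c).induced f)
    simp only [Coalgebra.Repr.induced_index, Coalgebra.Repr.induced_left,
      Coalgebra.Repr.induced_right, Function.comp_apply] at key
    rw [show Coalgebra.counit (R := k) (f c) = Coalgebra.counit (R := k) c from
      CoalgHomClass.counit_comp_apply f c] at key
    simp at key ⊢
    exact key
  have h2 : ∀ c : A, LinearMap.mul' k B (TensorProduct.map
      f.toLinearMap (f.toLinearMap ∘ₗ (HopfAlgebra.antipode (R := k) (A := A)))
      (Coalgebra.comul c)) = Coalgebra.counit (R := k) c • 1 := by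
    intro c
    rw [← (ℛ k c).eq]
    simp only [map_sum, TensorProduct.map_tmul, LinearMap.mul'_apply,
      LinearMap.comp_apply]
    have key := sum_mul_antipode_eq_smul (ℛ k c)
    calc ∑ j ∈ (ℛ k c).index,
          f.toLinearMap ((ℛ k c).left j) *
            f.toLinearMap (HopfAlgebra.antipode (R := k) ((ℛ k c).right j))
        = f (∑ j ∈ (ℛ k c).index,
            (ℛ k c).left j * HopfAlgebra.antipode (R := k) ((ℛ k c).right j)) := by
          rw [map_sum]
          exact Finset.sum_congr rfl fun j _ => (map_mul f _ _).symm
      _ = Coalgebra.counit (R := k) c • 1 := by rw [key, map_smul, map_one]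
  have heq := conv_unique _ _ _ h1 h2
  exact LinearMap.congr_fun heq a

/-! ### Properties of `π`, `Π` and `▷` -/

lemma piMap_apply (i : A →ₐc[k] B) (p : B →ₐc[k] A) (b : B) :
    piMap i p b = i (p b) := rfl

lemma piMap_eq_comp (i : A →ₐc[k] B) (p : B →ₐc[k] A) (b : B) :
    piMap i p b = (i.comp p) b := rfl

lemma pi_mul (i : A →ₐc[k] B) (p : B →ₐc[k] A) (x y : B) :
    piMap i p (x * y) = piMap i p x * piMap i p y := by
  simp [piMap_apply, map_mul]

lemma pi_one (i : A →ₐc[k] B) (p : B →ₐc[k] A) :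
    piMap i p (1 : B) = 1 := by simp [piMap_apply]

lemma counit_pi (i : A →ₐc[k] B) (p : B →ₐc[k] A) (b : B) :
    Coalgebra.counit (R := k) (piMap i p b) = Coalgebra.counit (R := k) b := by
  rw [piMap_eq_comp]
  exact CoalgHomClass.counit_comp_apply (i.comp p) b

lemma pi_antipode (i : A →ₐc[k] B) (p : B →ₐc[k] A)
    (hsplit : ∀ a : A, p (i a) = a) (b : B) :
    piMap i p (HopfAlgebra.antipode (R := k) (piMap i p b))
      = HopfAlgebra.antipode (R := k) (piMap i p b) := by
  rw [piMap_apply i p b, antipode_comp_bialgHom i (p b)]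
  rw [piMap_apply, hsplit]

lemma PiMap_repr (i : A →ₐc[k] B) (p : B →ₐc[k] A) {b : B} {ι : Type*} (r : Repr k b ι) :
    PiMap i p b = ∑ j ∈ r.index,
      r.left j * HopfAlgebra.antipode (R := k) (piMap i p (r.right j)) := by
  rw [PiMap]
  simp only [LinearMap.comp_apply]
  rw [← r.eq]
  simp [map_sum]

lemma adActT_tmul (i : A →ₐc[k] B) (p : B →ₐc[k] A) {b : B} {ι : Type*} (r : Repr k b ι) (x : B) :
    adActT i p (b ⊗ₜ[k] x) = ∑ j ∈ r.index,
      r.left j * x * HopfAlgebra.antipode (R := k) (piMap i p (r.right j)) := by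
  rw [adActT]
  simp only [LinearMap.comp_apply, LinearMap.rTensor_tmul]
  rw [← r.eq]
  simp [map_sum, TensorProduct.sum_tmul]

lemma PiMap_pi (i : A →ₐc[k] B) (p : B →ₐc[k] A)
    (hsplit : ∀ a : A, p (i a) = a) (b' : B) :
    PiMap i p (piMap i p b') = Coalgebra.counit (R := k) b' • 1 := by
  rw [piMap_eq_comp, PiMap_repr i p ((ℛ k b').induced (i.comp p))]
  simp only [Coalgebra.Repr.induced_index, Coalgebra.Repr.induced_left,
    Coalgebra.Repr.induced_right, Function.comp_apply]
  have hpi : ∀ z : B, piMap i p ((i.comp p) z) = (i.comp p) z := by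
    intro z
    rw [show ((i.comp p) z : B) = i (p z) from rfl, piMap_apply, hsplit]
  simp_rw [hpi]
  have key := sum_mul_antipode_eq_smul ((ℛ k b').induced (i.comp p))
  simp only [Coalgebra.Repr.induced_index, Coalgebra.Repr.induced_left,
    Coalgebra.Repr.induced_right, Function.comp_apply] at key
  rw [key, CoalgHomClass.counit_comp_apply]

lemma part1 (i : A →ₐc[k] B) (p : B →ₐc[k] A) (b b' : B) :
    PiMap i p (b * b') = adActT i p (b ⊗ₜ[k] PiMap i p b') := by
  rw [PiMap_repr i p (reprMul (ℛ k b) (ℛ k b')), adActT_tmul i p (ℛ k b)]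
  dsimp only [reprMul]
  rw [Finset.sum_product]
  refine Finset.sum_congr rfl fun x _ => ?_
  rw [PiMap_repr i p (ℛ k b'), Finset.mul_sum, Finset.sum_mul]
  refine Finset.sum_congr rfl fun y _ => ?_
  rw [pi_mul, antipode_mul]
  simp [mul_assoc]

lemma part2 (i : A →ₐc[k] B) (p : B →ₐc[k] A)
    (hsplit : ∀ a : A, p (i a) = a) (b b' : B) :
    PiMap i p (b * piMap i p b')
      = Coalgebra.counit (R := k) b' • PiMap i p b := by
  rw [PiMap_repr i p (reprMul (ℛ k b) (ℛ k (piMap i p b')))]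
  dsimp only [reprMul]
  rw [Finset.sum_product]
  have step1 : ∀ x ∈ (ℛ k b).index, ∑ y ∈ (ℛ k (piMap i p b')).index,
      (ℛ k b).left x * (ℛ k (piMap i p b')).left y *
        HopfAlgebra.antipode (R := k)
          (piMap i p ((ℛ k b).right x * (ℛ k (piMap i p b')).right y))
      = (ℛ k b).left x * ((∑ y ∈ (ℛ k (piMap i p b')).index,
          (ℛ k (piMap i p b')).left y *
            HopfAlgebra.antipode (R := k) (piMap i p ((ℛ k (piMap i p b')).right y))) *
        HopfAlgebra.antipode (R := k) (piMap i p ((ℛ k b).right x))) := by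
    intro x _
    rw [Finset.sum_mul, Finset.mul_sum]
    refine Finset.sum_congr rfl fun y _ => ?_
    rw [pi_mul, antipode_mul]
    simp [mul_assoc]
  rw [Finset.sum_congr rfl step1, ← PiMap_repr i p (ℛ k (piMap i p b')),
    PiMap_pi i p hsplit]
  simp_rw [smul_mul_assoc, one_mul, mul_smul_comm]
  rw [← Finset.smul_sum, ← PiMap_repr i p (ℛ k b)]

lemma part4 (i : A →ₐc[k] B) (p : B →ₐc[k] A) (b b' x : B) :
    adActT i p ((b * b') ⊗ₜ[k] x)
      = adActT i p (b ⊗ₜ[k] adActT i p (b' ⊗ₜ[k] x)) := by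
  rw [adActT_tmul i p (reprMul (ℛ k b) (ℛ k b')), adActT_tmul i p (ℛ k b)]
  dsimp only [reprMul]
  rw [Finset.sum_product]
  refine Finset.sum_congr rfl fun j _ => ?_
  rw [adActT_tmul i p (ℛ k b'), Finset.mul_sum, Finset.sum_mul]
  refine Finset.sum_congr rfl fun y _ => ?_
  rw [pi_mul, antipode_mul]
  simp [mul_assoc]

lemma part5 (i : A →ₐc[k] B) (p : B →ₐc[k] A) (x : B) :
    adActT i p ((1 : B) ⊗ₜ[k] x) = x := by
  rw [adActT_tmul i p reprOne]
  simp [reprOne, pi_one, antipode_one]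

lemma part3 (i : A →ₐc[k] B) (p : B →ₐc[k] A)
    (hsplit : ∀ a : A, p (i a) = a) (b x : B) (hx : PiMap i p x = x) :
    PiMap i p (adActT i p (b ⊗ₜ[k] x)) = adActT i p (b ⊗ₜ[k] x) := by
  conv_lhs => rw [adActT_tmul i p (ℛ k b)]
  rw [map_sum]
  have hterm : ∀ j ∈ (ℛ k b).index,
      PiMap i p ((ℛ k b).left j * x *
        HopfAlgebra.antipode (R := k) (piMap i p ((ℛ k b).right j)))
      = Coalgebra.counit (R := k) ((ℛ k b).right j) •
          adActT i p ((ℛ k b).left j ⊗ₜ[k] x) := by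
    intro j _
    conv_lhs => rw [← pi_antipode i p hsplit ((ℛ k b).right j)]
    rw [part2 i p hsplit, counit_antipode, counit_pi, part1, hx]
  rw [Finset.sum_congr rfl hterm]
  have : ∀ j : B × B, Coalgebra.counit (R := k) ((ℛ k b).right j) •
      adActT i p ((ℛ k b).left j ⊗ₜ[k] x)
      = adActT i p ((Coalgebra.counit (R := k) ((ℛ k b).right j) • (ℛ k b).left j) ⊗ₜ[k] x) := by
    intro j
    rw [← map_smul, TensorProduct.smul_tmul']
  simp_rw [this]
  rw [← map_sum, ← TensorProduct.sum_tmul, sum_counit_smul_left (ℛ k b)]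

end Statement5Aux

open Statement5Aux

/-- For a split pair of Hopf algebras `(A, B, i, p)`:
(1) `Π(b · b') = Σ b₍₁₎ · Π(b') · S(π(b₍₂₎))`; (2) `Π(b · π(b')) = ε(b') Π(b)`.
Consequently `b ▷ x := Σ b₍₁₎ · x · S(π(b₍₂₎))` maps `B ⊗ L` into `L` and defines a left
`B`-module structure on `L`. -/
theorem statement5 (i : A →ₐc[k] B) (p : B →ₐc[k] A) (hsplit : ∀ a : A, p (i a) = a) :
    -- (1) `Π(b · b') = Σ b₍₁₎ · Π(b') · S(π(b₍₂₎))`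
    (PiMap i p ∘ₗ LinearMap.mul' k B = adActT i p ∘ₗ LinearMap.lTensor B (PiMap i p)) ∧
    -- (2) `Π(b · π(b')) = ε(b') Π(b)`
    (∀ b b' : B, PiMap i p (b * piMap i p b') = Coalgebra.counit (R := k) b' • PiMap i p b) ∧
    -- `▷` maps `B ⊗ L` into `L`
    (∀ b x : B, PiMap i p x = x →
      PiMap i p (adActT i p (b ⊗ₜ[k] x)) = adActT i p (b ⊗ₜ[k] x)) ∧
    -- `▷` is a left `B`-module structure on `L`
    (∀ b b' x : B, PiMap i p x = x →
      adActT i p ((b * b') ⊗ₜ[k] x) = adActT i p (b ⊗ₜ[k] adActT i p (b' ⊗ₜ[k] x))) ∧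
    (∀ x : B, PiMap i p x = x → adActT i p ((1 : B) ⊗ₜ[k] x) = x) := by
  refine ⟨?_, fun b b' => part2 i p hsplit b b', fun b x hx => part3 i p hsplit b x hx,
    fun b b' x _ => part4 i p b b' x, fun x _ => part5 i p x⟩
  apply TensorProduct.ext'
  intro b b'
  simpa using part1 i p b b'
end
end

section
/- Let (A, B, i, p) be a split pair of Hopf algebras, with π, Π, L as in the context. Then (id ⊗ π)(Δ(Π(b))) = Π(b) ⊗ 1 for every b ∈ B, and conversely any b ∈ B with (id ⊗ π)(Δ(b)) = b ⊗ 1 satisfies Π(b) = b. Hence L = { b ∈ B : (id ⊗ π)(Δ(b)) = b ⊗ 1 }. -/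
open TensorProduct

noncomputable section

namespace ConvAux

variable {k : Type} [Field k]
variable {B : Type} [Ring B] [HopfAlgebra k B]
variable {C : Type} [Ring C] [Algebra k C]
variable {D : Type} [Ring D] [Algebra k D]

/-- Convolution product on `Hom(B, C)`. -/
def convMul (f g : B →ₗ[k] C) : B →ₗ[k] C :=
  LinearMap.mul' k C ∘ₗ TensorProduct.map f g ∘ₗ (Coalgebra.comul : B →ₗ[k] B ⊗[k] B)

/-- Convolution unit. -/
def cunit : B →ₗ[k] C :=
  Algebra.linearMap k C ∘ₗ (Coalgebra.counit : B →ₗ[k] k)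

lemma mul'_assoc :
    LinearMap.mul' k C ∘ₗ LinearMap.rTensor C (LinearMap.mul' k C) =
      LinearMap.mul' k C ∘ₗ LinearMap.lTensor C (LinearMap.mul' k C) ∘ₗ
        (TensorProduct.assoc k C C C).toLinearMap := by
  ext x y z
  simp [mul_assoc]

lemma assoc_naturality {M N P M' N' P' : Type} [AddCommGroup M] [AddCommGroup N]
    [AddCommGroup P] [AddCommGroup M'] [AddCommGroup N'] [AddCommGroup P']
    [Module k M] [Module k N] [Module k P] [Module k M'] [Module k N'] [Module k P']
    (f : M →ₗ[k] M') (g : N →ₗ[k] N') (h : P →ₗ[k] P') :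
    (TensorProduct.assoc k M' N' P').toLinearMap ∘ₗ
        TensorProduct.map (TensorProduct.map f g) h =
      TensorProduct.map f (TensorProduct.map g h) ∘ₗ
        (TensorProduct.assoc k M N P).toLinearMap := by
  ext x y z
  simp

lemma convMul_assoc (f g h : B →ₗ[k] C) :
    convMul (convMul f g) h = convMul f (convMul g h) := by
  have h1 : convMul (convMul f g) h =
      LinearMap.mul' k C ∘ₗ LinearMap.rTensor C (LinearMap.mul' k C) ∘ₗ
        TensorProduct.map (TensorProduct.map f g) h ∘ₗ
        LinearMap.rTensor B (Coalgebra.comul : B →ₗ[k] B ⊗[k] B) ∘ₗ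
        (Coalgebra.comul : B →ₗ[k] B ⊗[k] B) := by
    unfold convMul
    rw [show TensorProduct.map (LinearMap.mul' k C ∘ₗ TensorProduct.map f g ∘ₗ
        (Coalgebra.comul : B →ₗ[k] B ⊗[k] B)) h
      = LinearMap.rTensor C (LinearMap.mul' k C) ∘ₗ
          TensorProduct.map (TensorProduct.map f g) h ∘ₗ
          LinearMap.rTensor B (Coalgebra.comul : B →ₗ[k] B ⊗[k] B) from ?_]
    · rfl
    · ext x y
      simp [LinearMap.rTensor]
  have h2 : convMul f (convMul g h) =
      LinearMap.mul' k C ∘ₗ LinearMap.lTensor C (LinearMap.mul' k C) ∘ₗ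
        TensorProduct.map f (TensorProduct.map g h) ∘ₗ
        LinearMap.lTensor B (Coalgebra.comul : B →ₗ[k] B ⊗[k] B) ∘ₗ
        (Coalgebra.comul : B →ₗ[k] B ⊗[k] B) := by
    unfold convMul
    rw [show TensorProduct.map f (LinearMap.mul' k C ∘ₗ TensorProduct.map g h ∘ₗ
        (Coalgebra.comul : B →ₗ[k] B ⊗[k] B))
      = LinearMap.lTensor C (LinearMap.mul' k C) ∘ₗ
          TensorProduct.map f (TensorProduct.map g h) ∘ₗ
          LinearMap.lTensor B (Coalgebra.comul : B →ₗ[k] B ⊗[k] B) from ?_]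
    · rfl
    · ext x y
      simp [LinearMap.lTensor]
  rw [h1, h2]
  have hco := Coalgebra.coassoc (R := k) (A := B)
  calc LinearMap.mul' k C ∘ₗ LinearMap.rTensor C (LinearMap.mul' k C) ∘ₗ
        TensorProduct.map (TensorProduct.map f g) h ∘ₗ
        LinearMap.rTensor B (Coalgebra.comul : B →ₗ[k] B ⊗[k] B) ∘ₗ
        (Coalgebra.comul : B →ₗ[k] B ⊗[k] B)
      = (LinearMap.mul' k C ∘ₗ LinearMap.rTensor C (LinearMap.mul' k C)) ∘ₗ
          TensorProduct.map (TensorProduct.map f g) h ∘ₗ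
          (LinearMap.rTensor B (Coalgebra.comul : B →ₗ[k] B ⊗[k] B) ∘ₗ
          (Coalgebra.comul : B →ₗ[k] B ⊗[k] B)) := by
        simp only [LinearMap.comp_assoc]
    _ = LinearMap.mul' k C ∘ₗ LinearMap.lTensor C (LinearMap.mul' k C) ∘ₗ
          ((TensorProduct.assoc k C C C).toLinearMap ∘ₗ
          TensorProduct.map (TensorProduct.map f g) h) ∘ₗ
          (LinearMap.rTensor B (Coalgebra.comul : B →ₗ[k] B ⊗[k] B) ∘ₗ
          (Coalgebra.comul : B →ₗ[k] B ⊗[k] B)) := by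
        rw [mul'_assoc]; simp only [LinearMap.comp_assoc]
    _ = LinearMap.mul' k C ∘ₗ LinearMap.lTensor C (LinearMap.mul' k C) ∘ₗ
          TensorProduct.map f (TensorProduct.map g h) ∘ₗ
          ((TensorProduct.assoc k B B B).toLinearMap ∘ₗ
          LinearMap.rTensor B (Coalgebra.comul : B →ₗ[k] B ⊗[k] B) ∘ₗ
          (Coalgebra.comul : B →ₗ[k] B ⊗[k] B)) := by
        rw [assoc_naturality]; simp only [LinearMap.comp_assoc]
    _ = LinearMap.mul' k C ∘ₗ LinearMap.lTensor C (LinearMap.mul' k C) ∘ₗ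
          TensorProduct.map f (TensorProduct.map g h) ∘ₗ
          (LinearMap.lTensor B (Coalgebra.comul : B →ₗ[k] B ⊗[k] B) ∘ₗ
          (Coalgebra.comul : B →ₗ[k] B ⊗[k] B)) := by
        rw [← LinearMap.comp_assoc, hco]; simp only [LinearMap.comp_assoc]
    _ = _ := by simp only [LinearMap.comp_assoc]

lemma convMul_cunit (f : B →ₗ[k] C) : convMul f cunit = f := by
  ext b
  have : TensorProduct.map f (Algebra.linearMap k C ∘ₗ (Coalgebra.counit : B →ₗ[k] k))
      = TensorProduct.map f (Algebra.linearMap k C) ∘ₗ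
        LinearMap.lTensor B (Coalgebra.counit : B →ₗ[k] k) := by
    ext x y; simp [LinearMap.lTensor]
  simp only [convMul, cunit, LinearMap.comp_apply, this]
  rw [Coalgebra.lTensor_counit_comul]
  simp

lemma cunit_convMul (f : B →ₗ[k] C) : convMul cunit f = f := by
  ext b
  have : TensorProduct.map (Algebra.linearMap k C ∘ₗ (Coalgebra.counit : B →ₗ[k] k)) f
      = TensorProduct.map (Algebra.linearMap k C) f ∘ₗ
        LinearMap.rTensor B (Coalgebra.counit : B →ₗ[k] k) := by
    ext x y; simp [LinearMap.rTensor]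
  simp only [convMul, cunit, LinearMap.comp_apply, this]
  rw [Coalgebra.rTensor_counit_comul]
  simp [Algebra.algebraMap_eq_smul_one]

/-- Postcomposition by an algebra map distributes over convolution. -/
lemma algHom_comp_convMul (h : C →ₐ[k] D) (f g : B →ₗ[k] C) :
    h.toLinearMap ∘ₗ convMul f g = convMul (h.toLinearMap ∘ₗ f) (h.toLinearMap ∘ₗ g) := by
  have hm : h.toLinearMap ∘ₗ LinearMap.mul' k C
      = LinearMap.mul' k D ∘ₗ TensorProduct.map h.toLinearMap h.toLinearMap := by
    ext x y; simp
  unfold convMul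
  rw [← LinearMap.comp_assoc, ← LinearMap.comp_assoc, hm, TensorProduct.map_comp]
  simp only [LinearMap.comp_assoc]

lemma algHom_comp_cunit (h : C →ₐ[k] D) :
    h.toLinearMap ∘ₗ (cunit : B →ₗ[k] C) = cunit := by
  ext b; simp [cunit]

/-- Precomposition by a coalgebra-compatible map distributes over convolution. -/
lemma convMul_comp (f g : B →ₗ[k] C) (q : B →ₗ[k] B)
    (hq : (Coalgebra.comul : B →ₗ[k] B ⊗[k] B) ∘ₗ q
      = TensorProduct.map q q ∘ₗ (Coalgebra.comul : B →ₗ[k] B ⊗[k] B)) :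
    convMul f g ∘ₗ q = convMul (f ∘ₗ q) (g ∘ₗ q) := by
  unfold convMul
  rw [LinearMap.comp_assoc, LinearMap.comp_assoc, hq,
    ← LinearMap.comp_assoc (Coalgebra.comul) (TensorProduct.map q q) (TensorProduct.map f g),
    ← TensorProduct.map_comp]

lemma cunit_comp (q : B →ₗ[k] B)
    (hq : (Coalgebra.counit : B →ₗ[k] k) ∘ₗ q = Coalgebra.counit) :
    (cunit : B →ₗ[k] C) ∘ₗ q = cunit := by
  unfold cunit
  rw [LinearMap.comp_assoc, hq]

lemma convMul_antipode_id :
    convMul (HopfAlgebra.antipode (R := k) (A := B)) LinearMap.id = (cunit : B →ₗ[k] B) := by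
  have := HopfAlgebra.mul_antipode_rTensor_comul (R := k) (A := B)
  unfold convMul cunit
  rw [show TensorProduct.map (HopfAlgebra.antipode (R := k) (A := B)) LinearMap.id
    = LinearMap.rTensor B (HopfAlgebra.antipode (R := k) (A := B)) from rfl]
  rw [← LinearMap.comp_assoc] at this ⊢
  exact this

lemma convMul_id_antipode :
    convMul LinearMap.id (HopfAlgebra.antipode (R := k) (A := B)) = (cunit : B →ₗ[k] B) := by
  have := HopfAlgebra.mul_antipode_lTensor_comul (R := k) (A := B)
  unfold convMul cunit
  rw [show TensorProduct.map LinearMap.id (HopfAlgebra.antipode (R := k) (A := B))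
    = LinearMap.lTensor B (HopfAlgebra.antipode (R := k) (A := B)) from rfl]
  rw [← LinearMap.comp_assoc] at this ⊢
  exact this

lemma antipode_one : HopfAlgebra.antipode (R := k) (A := B) 1 = 1 := by
  have h := HopfAlgebra.mul_antipode_rTensor_comul_apply (R := k) (A := B) 1
  rw [Bialgebra.comul_one, Algebra.TensorProduct.one_def] at h
  simpa using h

section SplitPair

variable {A : Type} [Ring A] [HopfAlgebra k A]

def piMap' (i : A →ₐc[k] B) (p : B →ₐc[k] A) : B →ₗ[k] B :=
  i.toLinearMap ∘ₗ p.toLinearMap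

lemma pi_pi (i : A →ₐc[k] B) (p : B →ₐc[k] A) (hsplit : ∀ a : A, p (i a) = a) :
    piMap' i p ∘ₗ piMap' i p = piMap' i p := by
  ext b
  show i (p (i (p b))) = i (p b)
  rw [hsplit]

lemma pi_comul (i : A →ₐc[k] B) (p : B →ₐc[k] A) :
    (Coalgebra.comul : B →ₗ[k] B ⊗[k] B) ∘ₗ piMap' i p
      = TensorProduct.map (piMap' i p) (piMap' i p) ∘ₗ Coalgebra.comul := by
  have hi : TensorProduct.map i.toLinearMap i.toLinearMap ∘ₗ Coalgebra.comul
      = Coalgebra.comul ∘ₗ i.toLinearMap := CoalgHomClass.map_comp_comul i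
  have hp : TensorProduct.map p.toLinearMap p.toLinearMap ∘ₗ Coalgebra.comul
      = Coalgebra.comul ∘ₗ p.toLinearMap := CoalgHomClass.map_comp_comul p
  unfold piMap'
  calc (Coalgebra.comul : B →ₗ[k] B ⊗[k] B) ∘ₗ (i.toLinearMap ∘ₗ p.toLinearMap)
      = ((Coalgebra.comul : B →ₗ[k] B ⊗[k] B) ∘ₗ i.toLinearMap) ∘ₗ p.toLinearMap := by
        simp only [LinearMap.comp_assoc]
    _ = (TensorProduct.map i.toLinearMap i.toLinearMap ∘ₗ Coalgebra.comul) ∘ₗ p.toLinearMap := by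
        rw [hi]
    _ = TensorProduct.map i.toLinearMap i.toLinearMap ∘ₗ
          (TensorProduct.map p.toLinearMap p.toLinearMap ∘ₗ Coalgebra.comul) := by
        rw [LinearMap.comp_assoc, hp]
    _ = (TensorProduct.map i.toLinearMap i.toLinearMap ∘ₗ
          TensorProduct.map p.toLinearMap p.toLinearMap) ∘ₗ Coalgebra.comul := by
        simp only [LinearMap.comp_assoc]
    _ = _ := by rw [← TensorProduct.map_comp]

lemma pi_counit (i : A →ₐc[k] B) (p : B →ₐc[k] A) :
    (Coalgebra.counit : B →ₗ[k] k) ∘ₗ piMap' i p = Coalgebra.counit := by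
  have hi : (Coalgebra.counit : B →ₗ[k] k) ∘ₗ i.toLinearMap = Coalgebra.counit :=
    CoalgHomClass.counit_comp i
  have hp : (Coalgebra.counit : A →ₗ[k] k) ∘ₗ p.toLinearMap = Coalgebra.counit :=
    CoalgHomClass.counit_comp p
  unfold piMap'
  rw [← LinearMap.comp_assoc, hi, hp]

/-- `π` as an algebra hom. -/
def piAlg (i : A →ₐc[k] B) (p : B →ₐc[k] A) : B →ₐ[k] B :=
  (i : A →ₐ[k] B).comp (p : B →ₐ[k] A)

lemma piAlg_toLinearMap (i : A →ₐc[k] B) (p : B →ₐc[k] A) :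
    (piAlg i p).toLinearMap = piMap' i p := rfl

/-- `T = (id ⊗ π) ∘ Δ` as an algebra hom. -/
def TAlg (i : A →ₐc[k] B) (p : B →ₐc[k] A) : B →ₐ[k] B ⊗[k] B :=
  (Algebra.TensorProduct.map (AlgHom.id k B) (piAlg i p)).comp (Bialgebra.comulAlgHom k B)

lemma TAlg_toLinearMap (i : A →ₐc[k] B) (p : B →ₐc[k] A) :
    (TAlg i p).toLinearMap = LinearMap.lTensor B (piMap' i p) ∘ₗ Coalgebra.comul := by
  have h : (Algebra.TensorProduct.map (AlgHom.id k B) (piAlg i p)).toLinearMap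
      = LinearMap.lTensor B (piMap' i p) := by
    apply TensorProduct.ext'
    intro x y
    show x ⊗ₜ[k] (piAlg i p) y = x ⊗ₜ[k] (piMap' i p) y
    rfl
  ext b
  simp only [TAlg, AlgHom.comp_toLinearMap, LinearMap.comp_apply]
  rw [h]
  rfl

/-- The key Sweedler computation: `(j ∘ S) * T = (b ↦ 1 ⊗ π b)`. -/
lemma key_conv (i : A →ₐc[k] B) (p : B →ₐc[k] A) :
    convMul ((Algebra.TensorProduct.includeLeft : B →ₐ[k] B ⊗[k] B).toLinearMap ∘ₗ
        HopfAlgebra.antipode (R := k) (A := B))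
      (LinearMap.lTensor B (piMap' i p) ∘ₗ Coalgebra.comul)
      = TensorProduct.mk k B B 1 ∘ₗ piMap' i p := by
  set S : B →ₗ[k] B := HopfAlgebra.antipode (R := k) (A := B) with hS
  set π : B →ₗ[k] B := piMap' i p with hπ
  set jS : B →ₗ[k] B ⊗[k] B :=
    (Algebra.TensorProduct.includeLeft : B →ₐ[k] B ⊗[k] B).toLinearMap ∘ₗ S with hjS
  have step1 : TensorProduct.map jS (LinearMap.lTensor B π ∘ₗ Coalgebra.comul)
      = TensorProduct.map jS (LinearMap.lTensor B π) ∘ₗ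
        LinearMap.lTensor B (Coalgebra.comul : B →ₗ[k] B ⊗[k] B) := by
    apply TensorProduct.ext'
    intro x y
    simp [LinearMap.lTensor]
  have step3 : LinearMap.mul' k (B ⊗[k] B) ∘ₗ
        TensorProduct.map jS (LinearMap.lTensor B π) ∘ₗ
        (TensorProduct.assoc k B B B).toLinearMap
      = TensorProduct.map (LinearMap.mul' k B ∘ₗ LinearMap.rTensor B S) π := by
    apply TensorProduct.ext'
    intro xy z
    refine xy.induction_on ?_ (fun x y => ?_) (fun u v hu hv => ?_)
    · simp only [zero_tmul, map_zero]
    · simp [hjS, Algebra.TensorProduct.tmul_mul_tmul, LinearMap.lTensor, LinearMap.rTensor]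
    · simp only [add_tmul, map_add, hu, hv]
  have coassoc' : LinearMap.lTensor B (Coalgebra.comul : B →ₗ[k] B ⊗[k] B) ∘ₗ
        (Coalgebra.comul : B →ₗ[k] B ⊗[k] B)
      = (TensorProduct.assoc k B B B).toLinearMap ∘ₗ
        LinearMap.rTensor B (Coalgebra.comul : B →ₗ[k] B ⊗[k] B) ∘ₗ Coalgebra.comul :=
    Coalgebra.coassoc.symm
  have step4 : TensorProduct.map (LinearMap.mul' k B ∘ₗ LinearMap.rTensor B S) π ∘ₗ
        LinearMap.rTensor B (Coalgebra.comul : B →ₗ[k] B ⊗[k] B)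
      = TensorProduct.map (LinearMap.mul' k B ∘ₗ LinearMap.rTensor B S ∘ₗ Coalgebra.comul) π := by
    apply TensorProduct.ext'
    intro x y
    simp [LinearMap.rTensor]
  calc convMul jS (LinearMap.lTensor B π ∘ₗ Coalgebra.comul)
      = LinearMap.mul' k (B ⊗[k] B) ∘ₗ
          (TensorProduct.map jS (LinearMap.lTensor B π) ∘ₗ
          LinearMap.lTensor B (Coalgebra.comul : B →ₗ[k] B ⊗[k] B)) ∘ₗ
          Coalgebra.comul := by
        rw [convMul, step1]
    _ = LinearMap.mul' k (B ⊗[k] B) ∘ₗ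
          TensorProduct.map jS (LinearMap.lTensor B π) ∘ₗ
          (TensorProduct.assoc k B B B).toLinearMap ∘ₗ
          LinearMap.rTensor B (Coalgebra.comul : B →ₗ[k] B ⊗[k] B) ∘ₗ Coalgebra.comul := by
        rw [LinearMap.comp_assoc, coassoc']
    _ = (LinearMap.mul' k (B ⊗[k] B) ∘ₗ
          TensorProduct.map jS (LinearMap.lTensor B π) ∘ₗ
          (TensorProduct.assoc k B B B).toLinearMap) ∘ₗ
          LinearMap.rTensor B (Coalgebra.comul : B →ₗ[k] B ⊗[k] B) ∘ₗ Coalgebra.comul := by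
        simp only [LinearMap.comp_assoc]
    _ = (TensorProduct.map (LinearMap.mul' k B ∘ₗ LinearMap.rTensor B S) π ∘ₗ
          LinearMap.rTensor B (Coalgebra.comul : B →ₗ[k] B ⊗[k] B)) ∘ₗ Coalgebra.comul := by
        rw [step3]; simp only [LinearMap.comp_assoc]
    _ = TensorProduct.map (LinearMap.mul' k B ∘ₗ LinearMap.rTensor B S ∘ₗ Coalgebra.comul) π ∘ₗ
          Coalgebra.comul := by
        rw [step4]
    _ = TensorProduct.map (Algebra.linearMap k B ∘ₗ Coalgebra.counit) π ∘ₗ Coalgebra.comul := by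
        rw [show LinearMap.mul' k B ∘ₗ LinearMap.rTensor B S ∘ₗ Coalgebra.comul
          = Algebra.linearMap k B ∘ₗ Coalgebra.counit from
            HopfAlgebra.mul_antipode_rTensor_comul]
    _ = TensorProduct.mk k B B 1 ∘ₗ π := by
        ext b
        have hspl : TensorProduct.map (Algebra.linearMap k B ∘ₗ Coalgebra.counit) π
            = TensorProduct.map (Algebra.linearMap k B) π ∘ₗ
              LinearMap.rTensor B (Coalgebra.counit : B →ₗ[k] k) := by
          apply TensorProduct.ext'
          intro x y
          simp [LinearMap.rTensor]
        simp only [LinearMap.comp_apply, hspl]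
        rw [Coalgebra.rTensor_counit_comul]
        simp

/-- The main linear-map identity: `T ∘ Π = j ∘ Π`. -/
lemma part1_map (i : A →ₐc[k] B) (p : B →ₐc[k] A) (hsplit : ∀ a : A, p (i a) = a) :
    (LinearMap.lTensor B (piMap' i p) ∘ₗ Coalgebra.comul) ∘ₗ
        convMul LinearMap.id
          (HopfAlgebra.antipode (R := k) (A := B) ∘ₗ piMap' i p)
      = (Algebra.TensorProduct.includeLeft : B →ₐ[k] B ⊗[k] B).toLinearMap ∘ₗ
        convMul LinearMap.id
          (HopfAlgebra.antipode (R := k) (A := B) ∘ₗ piMap' i p) := by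
  set S : B →ₗ[k] B := HopfAlgebra.antipode (R := k) (A := B) with hSdef
  set π : B →ₗ[k] B := piMap' i p with hπdef
  set TL : B →ₗ[k] B ⊗[k] B := (TAlg i p).toLinearMap with hTLdef
  set jL : B →ₗ[k] B ⊗[k] B :=
    (Algebra.TensorProduct.includeLeft : B →ₐ[k] B ⊗[k] B).toLinearMap with hjLdef
  have hT : TL = LinearMap.lTensor B π ∘ₗ Coalgebra.comul := TAlg_toLinearMap i p
  have hΔπ := pi_comul i p
  have hεπ := pi_counit i p
  have hππ := pi_pi i p hsplit
  -- T and T∘S are convolution inverse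
  have hTinv : convMul TL (TL ∘ₗ S) = cunit := by
    have h := algHom_comp_convMul (TAlg i p) LinearMap.id S
    rw [convMul_id_antipode, algHom_comp_cunit] at h
    rw [LinearMap.comp_id] at h
    exact h.symm
  -- j and j∘S are convolution inverse
  have hjinv : convMul jL (jL ∘ₗ S) = cunit := by
    have h := algHom_comp_convMul (Algebra.TensorProduct.includeLeft : B →ₐ[k] B ⊗[k] B)
      LinearMap.id S
    rw [convMul_id_antipode, algHom_comp_cunit] at h
    rw [LinearMap.comp_id] at h
    exact h.symm
  have hjinv' : convMul (jL ∘ₗ S) jL = cunit := by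
    have h := algHom_comp_convMul (Algebra.TensorProduct.includeLeft : B →ₐ[k] B ⊗[k] B)
      S LinearMap.id
    rw [convMul_antipode_id, algHom_comp_cunit] at h
    rw [LinearMap.comp_id] at h
    exact h.symm
  -- π-precomposed inverse
  have hPP' : convMul (TL ∘ₗ π) ((TL ∘ₗ S) ∘ₗ π) = cunit := by
    rw [← convMul_comp _ _ π hΔπ, hTinv, cunit_comp _ hεπ]
  -- the key identity
  have hkey : convMul (jL ∘ₗ S) TL = TensorProduct.mk k B B 1 ∘ₗ π := by
    rw [hT]; exact key_conv i p
  have hQP : convMul ((jL ∘ₗ S) ∘ₗ π) (TL ∘ₗ π) = TensorProduct.mk k B B 1 ∘ₗ π := by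
    rw [← convMul_comp _ _ π hΔπ, hkey, LinearMap.comp_assoc, hππ]
  -- expand T = j * ((j∘S) * T)
  have e3 : TL = convMul jL (convMul (jL ∘ₗ S) TL) := by
    rw [← convMul_assoc, hjinv, cunit_convMul]
  -- LHS
  have lhs : TL ∘ₗ convMul LinearMap.id (S ∘ₗ π) = convMul TL ((TL ∘ₗ S) ∘ₗ π) := by
    have h := algHom_comp_convMul (TAlg i p) LinearMap.id (S ∘ₗ π)
    rw [LinearMap.comp_id] at h
    rw [h, ← LinearMap.comp_assoc]
  have rhs : jL ∘ₗ convMul LinearMap.id (S ∘ₗ π) = convMul jL ((jL ∘ₗ S) ∘ₗ π) := by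
    have h := algHom_comp_convMul (Algebra.TensorProduct.includeLeft : B →ₐ[k] B ⊗[k] B)
      LinearMap.id (S ∘ₗ π)
    rw [LinearMap.comp_id] at h
    rw [h, ← LinearMap.comp_assoc]
  rw [← hT, lhs, rhs]
  calc convMul TL ((TL ∘ₗ S) ∘ₗ π)
      = convMul (convMul jL (convMul (jL ∘ₗ S) TL)) ((TL ∘ₗ S) ∘ₗ π) := by rw [← e3]
    _ = convMul (convMul jL (convMul ((jL ∘ₗ S) ∘ₗ π) (TL ∘ₗ π))) ((TL ∘ₗ S) ∘ₗ π) := by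
        rw [hQP, hkey]
    _ = convMul jL (convMul ((jL ∘ₗ S) ∘ₗ π) (convMul (TL ∘ₗ π) ((TL ∘ₗ S) ∘ₗ π))) := by
        rw [convMul_assoc, convMul_assoc]
    _ = convMul jL ((jL ∘ₗ S) ∘ₗ π) := by
        rw [hPP', convMul_cunit]

end SplitPair

end ConvAux

open ConvAux

variable {k : Type} [Field k]
variable {A : Type} [Ring A] [HopfAlgebra k A]
variable {B : Type} [Ring B] [HopfAlgebra k B]

/-- For a split pair of Hopf algebras `(A, B, i, p)`:
`(id ⊗ π)(Δ(Π(b))) = Π(b) ⊗ 1` for every `b ∈ B`; conversely any `b` with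
`(id ⊗ π)(Δ(b)) = b ⊗ 1` satisfies `Π(b) = b`. Hence `L = {b ∈ B | (id ⊗ π)(Δ b) = b ⊗ 1}`. -/
theorem statement6 (i : A →ₐc[k] B) (p : B →ₐc[k] A) (hsplit : ∀ a : A, p (i a) = a) :
    (∀ b : B, LinearMap.lTensor B (piMap i p) (Coalgebra.comul (PiMap i p b)) =
      PiMap i p b ⊗ₜ[k] (1 : B)) ∧
    (∀ b : B, LinearMap.lTensor B (piMap i p) (Coalgebra.comul b) = b ⊗ₜ[k] (1 : B) →
      PiMap i p b = b) ∧
    (∀ b : B, b ∈ LinearMap.range (PiMap i p) ↔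
      LinearMap.lTensor B (piMap i p) (Coalgebra.comul b) = b ⊗ₜ[k] (1 : B)) := by
  have hpi : piMap i p = piMap' i p := rfl
  have hPi : PiMap i p = convMul LinearMap.id
      (HopfAlgebra.antipode (R := k) (A := B) ∘ₗ piMap' i p) := rfl
  have part1 : ∀ b : B, LinearMap.lTensor B (piMap i p) (Coalgebra.comul (PiMap i p b)) =
      PiMap i p b ⊗ₜ[k] (1 : B) := by
    intro b
    have h := LinearMap.congr_fun (part1_map i p hsplit) b
    simp only [LinearMap.comp_apply] at h
    rw [hpi, hPi]
    rw [show ((Algebra.TensorProduct.includeLeft : B →ₐ[k] B ⊗[k] B).toLinearMap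
      (convMul LinearMap.id (HopfAlgebra.antipode (R := k) (A := B) ∘ₗ piMap' i p) b))
      = (convMul LinearMap.id (HopfAlgebra.antipode (R := k) (A := B) ∘ₗ piMap' i p) b)
        ⊗ₜ[k] (1 : B) from rfl] at h
    exact h
  have part2 : ∀ b : B, LinearMap.lTensor B (piMap i p) (Coalgebra.comul b) = b ⊗ₜ[k] (1 : B) →
      PiMap i p b = b := by
    intro b hb
    have hmap : TensorProduct.map (LinearMap.id : B →ₗ[k] B)
        (HopfAlgebra.antipode (R := k) (A := B) ∘ₗ piMap i p)
        = LinearMap.lTensor B (HopfAlgebra.antipode (R := k) (A := B)) ∘ₗ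
          LinearMap.lTensor B (piMap i p) := by
      rw [← LinearMap.lTensor_comp]
      rfl
    show LinearMap.mul' k B (TensorProduct.map LinearMap.id
      (HopfAlgebra.antipode k ∘ₗ piMap i p) (Coalgebra.comul b)) = b
    rw [hmap, LinearMap.comp_apply, hb]
    simp [antipode_one]
  refine ⟨part1, part2, fun b => ⟨?_, fun hb => ?_⟩⟩
  · rintro ⟨b', rfl⟩
    exact part1 b'
  · exact ⟨b, part2 b hb⟩

end
end

section
/- Let (A, B, i, p) be a split pair of Hopf algebras, with π, Π, L as in the context. Then L is a unital subalgebra of B: 1 ∈ L, and for all x, y ∈ L one has x · y ∈ L (equivalently, Π(Π(b) · Π(b')) = Π(b) · Π(b') for all b, b' ∈ B). -/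
open TensorProduct

noncomputable section

variable {k : Type} [Field k]
variable {A : Type} [Ring A] [HopfAlgebra k A]
variable {B : Type} [Ring B] [HopfAlgebra k B]

namespace SplitHopfAux

section Conv

variable {C D E : Type} [AddCommMonoid C] [Module k C] [Coalgebra k C]
  [Semiring D] [Algebra k D] [Semiring E] [Algebra k E]

def conv (f g : C →ₗ[k] D) : C →ₗ[k] D :=
  LinearMap.mul' k D ∘ₗ TensorProduct.map f g ∘ₗ Coalgebra.comul

def cunit : C →ₗ[k] D := Algebra.linearMap k D ∘ₗ Coalgebra.counit

lemma conv_apply (f g : C →ₗ[k] D) (a : C) (r : Coalgebra.Repr k a (C × C)) :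
    conv f g a = ∑ i ∈ r.index, f (r.left i) * g (r.right i) := by
  simp only [conv, LinearMap.comp_apply, ← r.eq, map_sum, TensorProduct.map_tmul,
    LinearMap.mul'_apply]

lemma comp_conv (F : D →ₗ[k] E) (hF : ∀ x y : D, F (x * y) = F x * F y) (f g : C →ₗ[k] D) :
    F ∘ₗ conv f g = conv (F ∘ₗ f) (F ∘ₗ g) := by
  ext a
  rw [LinearMap.comp_apply, conv_apply _ _ _ (Coalgebra.Repr.arbitrary k a),
    conv_apply _ _ _ (Coalgebra.Repr.arbitrary k a)]
  simp [map_sum, hF]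

lemma comp_cunit (F : D →ₗ[k] E) (hF : ∀ r : k, F (algebraMap k D r) = algebraMap k E r) :
    F ∘ₗ (cunit : C →ₗ[k] D) = cunit := by
  ext a; simp [cunit, hF]

variable {C' : Type} [AddCommMonoid C'] [Module k C'] [Coalgebra k C']

lemma conv_comp (f g : C →ₗ[k] D) (φ : C' →ₗ[k] C)
    (hφ : Coalgebra.comul ∘ₗ φ = TensorProduct.map φ φ ∘ₗ Coalgebra.comul) :
    conv f g ∘ₗ φ = conv (f ∘ₗ φ) (g ∘ₗ φ) := by
  unfold conv
  simp only [LinearMap.comp_assoc]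
  rw [hφ]
  congr 1
  rw [← LinearMap.comp_assoc, ← TensorProduct.map_comp]

lemma cunit_comp (φ : C' →ₗ[k] C)
    (hφ : (Coalgebra.counit : C →ₗ[k] k) ∘ₗ φ = Coalgebra.counit) :
    (cunit : C →ₗ[k] D) ∘ₗ φ = cunit := by
  unfold cunit
  rw [LinearMap.comp_assoc, hφ]

lemma sum_counit_smul {a : C} (r : Coalgebra.Repr k a (C × C)) :
    ∑ i ∈ r.index, Coalgebra.counit (R := k) (r.left i) • r.right i = a := by
  have h := congrArg (TensorProduct.lid k C) (Coalgebra.sum_counit_tmul_eq r)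
  simp only [map_sum, TensorProduct.lid_tmul, one_smul] at h
  exact h

lemma sum_smul_counit {a : C} (r : Coalgebra.Repr k a (C × C)) :
    ∑ i ∈ r.index, Coalgebra.counit (R := k) (r.right i) • r.left i = a := by
  have h := congrArg (TensorProduct.rid k C) (Coalgebra.sum_tmul_counit_eq r)
  simp only [map_sum, TensorProduct.rid_tmul, one_smul] at h
  exact h

lemma cunit_conv (f : C →ₗ[k] D) : conv cunit f = f := by
  ext a
  rw [conv_apply _ _ _ (Coalgebra.Repr.arbitrary k a)]
  simp only [cunit, LinearMap.comp_apply, Algebra.linearMap_apply, ← Algebra.smul_def]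
  simp_rw [← map_smul, ← map_sum, sum_counit_smul]

lemma conv_cunit (f : C →ₗ[k] D) : conv f cunit = f := by
  ext a
  rw [conv_apply _ _ _ (Coalgebra.Repr.arbitrary k a)]
  simp only [cunit, LinearMap.comp_apply, Algebra.linearMap_apply]
  simp_rw [← Algebra.commutes, ← Algebra.smul_def, ← map_smul, ← map_sum, sum_smul_counit]

lemma conv_assoc (f g h : C →ₗ[k] D) : conv (conv f g) h = conv f (conv g h) := by
  ext a
  set r := Coalgebra.Repr.arbitrary k a with hr
  have key := Coalgebra.sum_tmul_tmul_eq (R := k) r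
    (fun i => Coalgebra.Repr.arbitrary k (r.left i))
    (fun i => Coalgebra.Repr.arbitrary k (r.right i))
  have key2 := congrArg
    (LinearMap.mul' k D ∘ₗ TensorProduct.map f (LinearMap.mul' k D ∘ₗ TensorProduct.map g h)) key
  simp only [map_sum, LinearMap.comp_apply, TensorProduct.map_tmul, LinearMap.mul'_apply] at key2
  rw [conv_apply _ _ _ r, conv_apply _ _ _ r]
  have e1 : ∀ i, conv f g (r.left i) * h (r.right i) =
      ∑ j ∈ (Coalgebra.Repr.arbitrary k (r.left i)).index,
        f ((Coalgebra.Repr.arbitrary k (r.left i)).left j) *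
          g ((Coalgebra.Repr.arbitrary k (r.left i)).right j) * h (r.right i) := fun i => by
    rw [conv_apply _ _ _ (Coalgebra.Repr.arbitrary k (r.left i)), Finset.sum_mul]
  have e2 : ∀ i, f (r.left i) * conv g h (r.right i) =
      ∑ j ∈ (Coalgebra.Repr.arbitrary k (r.right i)).index,
        f (r.left i) * (g ((Coalgebra.Repr.arbitrary k (r.right i)).left j) *
          h ((Coalgebra.Repr.arbitrary k (r.right i)).right j)) := fun i => by
    rw [conv_apply _ _ _ (Coalgebra.Repr.arbitrary k (r.right i)), Finset.mul_sum]
  simp_rw [e1, e2]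
  simpa [mul_assoc] using key2

lemma conv_inv_unique {f g h : C →ₗ[k] D} (h1 : conv f g = cunit) (h2 : conv h f = cunit) :
    g = h := by
  have := conv_assoc h f g
  rw [h1, h2, cunit_conv, conv_cunit] at this
  exact this

end Conv

section Hopf

variable {H : Type} [Semiring H] [HopfAlgebra k H]

lemma antipode_conv_id :
    conv (HopfAlgebra.antipode (R := k)) (LinearMap.id : H →ₗ[k] H) = cunit := by
  unfold conv cunit
  rw [show TensorProduct.map (HopfAlgebra.antipode (R := k)) (LinearMap.id : H →ₗ[k] H)
      = (HopfAlgebra.antipode (R := k)).rTensor H from rfl]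
  exact HopfAlgebra.mul_antipode_rTensor_comul

lemma id_conv_antipode :
    conv (LinearMap.id : H →ₗ[k] H) (HopfAlgebra.antipode (R := k)) = cunit := by
  unfold conv cunit
  rw [show TensorProduct.map (LinearMap.id : H →ₗ[k] H) (HopfAlgebra.antipode (R := k))
      = (HopfAlgebra.antipode (R := k)).lTensor H from rfl]
  exact HopfAlgebra.mul_antipode_lTensor_comul

lemma antipode_one : HopfAlgebra.antipode (R := k) (1 : H) = 1 := by
  have h := HopfAlgebra.mul_antipode_rTensor_comul_apply (R := k) (1 : H)
  simpa [Algebra.TensorProduct.one_def] using h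

lemma mul'_comp_map_incl :
    LinearMap.mul' k (H ⊗[k] H) ∘ₗ TensorProduct.map
      (Algebra.TensorProduct.includeLeft : H →ₐ[k] H ⊗[k] H).toLinearMap
      (Algebra.TensorProduct.includeRight : H →ₐ[k] H ⊗[k] H).toLinearMap = LinearMap.id := by
  apply TensorProduct.ext'
  intro x y
  simp [Algebra.TensorProduct.tmul_mul_tmul]

lemma mul'_comp_map_incl_rev :
    LinearMap.mul' k (H ⊗[k] H) ∘ₗ TensorProduct.map
      (Algebra.TensorProduct.includeRight : H →ₐ[k] H ⊗[k] H).toLinearMap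
      (Algebra.TensorProduct.includeLeft : H →ₐ[k] H ⊗[k] H).toLinearMap
      = (TensorProduct.comm k H H).toLinearMap := by
  apply TensorProduct.ext'
  intro x y
  simp [Algebra.TensorProduct.tmul_mul_tmul]

lemma comul_eq_conv :
    conv (Algebra.TensorProduct.includeLeft : H →ₐ[k] H ⊗[k] H).toLinearMap
      (Algebra.TensorProduct.includeRight : H →ₐ[k] H ⊗[k] H).toLinearMap
      = (Coalgebra.comul : H →ₗ[k] H ⊗[k] H) := by
  unfold conv
  rw [← LinearMap.comp_assoc, mul'_comp_map_incl, LinearMap.id_comp]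

lemma comm_antipode_eq_conv :
    conv ((Algebra.TensorProduct.includeRight : H →ₐ[k] H ⊗[k] H).toLinearMap
        ∘ₗ HopfAlgebra.antipode (R := k))
      ((Algebra.TensorProduct.includeLeft : H →ₐ[k] H ⊗[k] H).toLinearMap
        ∘ₗ HopfAlgebra.antipode (R := k))
      = (TensorProduct.comm k H H).toLinearMap
          ∘ₗ TensorProduct.map (HopfAlgebra.antipode (R := k)) (HopfAlgebra.antipode (R := k))
          ∘ₗ Coalgebra.comul := by
  unfold conv
  rw [TensorProduct.map_comp]
  simp only [← LinearMap.comp_assoc]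
  rw [mul'_comp_map_incl_rev]

lemma comul_antipode :
    (Coalgebra.comul : H →ₗ[k] H ⊗[k] H) ∘ₗ HopfAlgebra.antipode (R := k) =
    (TensorProduct.comm k H H).toLinearMap
      ∘ₗ TensorProduct.map (HopfAlgebra.antipode (R := k)) (HopfAlgebra.antipode (R := k))
      ∘ₗ Coalgebra.comul := by
  have hlm : ∀ x y : H,
      (Algebra.TensorProduct.includeLeft : H →ₐ[k] H ⊗[k] H).toLinearMap (x * y)
        = (Algebra.TensorProduct.includeLeft : H →ₐ[k] H ⊗[k] H).toLinearMap x
          * (Algebra.TensorProduct.includeLeft : H →ₐ[k] H ⊗[k] H).toLinearMap y := by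
    simp [map_mul]
  have hrm : ∀ x y : H,
      (Algebra.TensorProduct.includeRight : H →ₐ[k] H ⊗[k] H).toLinearMap (x * y)
        = (Algebra.TensorProduct.includeRight : H →ₐ[k] H ⊗[k] H).toLinearMap x
          * (Algebra.TensorProduct.includeRight : H →ₐ[k] H ⊗[k] H).toLinearMap y := by
    simp [map_mul]
  refine conv_inv_unique (f := (Coalgebra.comul : H →ₗ[k] H ⊗[k] H)) ?_ ?_
  · -- conv Δ (Δ ∘ S) = cunit
    have h := comp_conv (Coalgebra.comul : H →ₗ[k] H ⊗[k] H)
      (fun x y => Bialgebra.comul_mul x y) LinearMap.id (HopfAlgebra.antipode (R := k))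
    rw [id_conv_antipode, LinearMap.comp_id] at h
    rw [← h]
    exact comp_cunit _ fun r => (Bialgebra.comulAlgHom k H).commutes r
  · -- conv (comm ∘ map S S ∘ Δ) Δ = cunit
    rw [← comm_antipode_eq_conv, ← comul_eq_conv, conv_assoc,
      ← conv_assoc ((Algebra.TensorProduct.includeLeft : H →ₐ[k] H ⊗[k] H).toLinearMap
        ∘ₗ HopfAlgebra.antipode (R := k))]
    have hA : conv ((Algebra.TensorProduct.includeLeft : H →ₐ[k] H ⊗[k] H).toLinearMap
        ∘ₗ HopfAlgebra.antipode (R := k))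
        (Algebra.TensorProduct.includeLeft : H →ₐ[k] H ⊗[k] H).toLinearMap = cunit := by
      have h := comp_conv _ hlm (HopfAlgebra.antipode (R := k)) LinearMap.id
      rw [antipode_conv_id, LinearMap.comp_id] at h
      rw [← h]
      exact comp_cunit _ fun r => (Algebra.TensorProduct.includeLeft).commutes r
    rw [hA, cunit_conv]
    have h := comp_conv _ hrm (HopfAlgebra.antipode (R := k)) LinearMap.id
    rw [antipode_conv_id, LinearMap.comp_id] at h
    rw [← h]
    exact comp_cunit _ fun r => (Algebra.TensorProduct.includeRight).commutes r

variable {H' : Type} [Semiring H'] [HopfAlgebra k H']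

lemma hom_antipode (f : H →ₐc[k] H') :
    f.toLinearMap ∘ₗ HopfAlgebra.antipode (R := k) =
      HopfAlgebra.antipode (R := k) ∘ₗ f.toLinearMap := by
  refine conv_inv_unique (f := f.toLinearMap) ?_ ?_
  · have h := comp_conv f.toLinearMap (fun x y => map_mul f x y)
      LinearMap.id (HopfAlgebra.antipode (R := k))
    rw [id_conv_antipode, LinearMap.comp_id] at h
    rw [← h]
    exact comp_cunit _ fun r => AlgHomClass.commutes f r
  · have h := conv_comp (HopfAlgebra.antipode (R := k)) LinearMap.id f.toLinearMap
      (CoalgHomClass.map_comp_comul f).symm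
    rw [antipode_conv_id, LinearMap.id_comp] at h
    rw [← h]
    exact cunit_comp _ (CoalgHomClass.counit_comp f)

end Hopf


section Split

variable (i : A →ₐc[k] B) (p : B →ₐc[k] A)


lemma comul_pi : (Coalgebra.comul : B →ₗ[k] B ⊗[k] B) ∘ₗ piMap i p
    = TensorProduct.map (piMap i p) (piMap i p) ∘ₗ Coalgebra.comul := by
  have hi : TensorProduct.map i.toLinearMap i.toLinearMap ∘ₗ Coalgebra.comul
      = Coalgebra.comul ∘ₗ i.toLinearMap := CoalgHomClass.map_comp_comul i
  have hp : TensorProduct.map p.toLinearMap p.toLinearMap ∘ₗ Coalgebra.comul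
      = Coalgebra.comul ∘ₗ p.toLinearMap := CoalgHomClass.map_comp_comul p
  unfold piMap
  rw [← LinearMap.comp_assoc, ← hi, LinearMap.comp_assoc, ← hp, ← LinearMap.comp_assoc,
    ← TensorProduct.map_comp]

lemma counit_pi : (Coalgebra.counit : B →ₗ[k] k) ∘ₗ piMap i p = Coalgebra.counit := by
  have hi : (Coalgebra.counit : B →ₗ[k] k) ∘ₗ i.toLinearMap = Coalgebra.counit :=
    CoalgHomClass.counit_comp i
  have hp : (Coalgebra.counit : A →ₗ[k] k) ∘ₗ p.toLinearMap = Coalgebra.counit :=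
    CoalgHomClass.counit_comp p
  unfold piMap
  rw [← LinearMap.comp_assoc, hi, hp]

lemma pi_antipode : piMap i p ∘ₗ HopfAlgebra.antipode (R := k)
    = HopfAlgebra.antipode (R := k) ∘ₗ piMap i p := by
  unfold piMap
  rw [LinearMap.comp_assoc, hom_antipode p, ← LinearMap.comp_assoc, hom_antipode i,
    LinearMap.comp_assoc]

lemma pi_pi (hsplit : ∀ a : A, p (i a) = a) : piMap i p ∘ₗ piMap i p = piMap i p := by
  ext b
  show i (p (i (p b))) = i (p b)
  rw [hsplit]

lemma map_id_pi_eq (w : B ⊗[k] B) :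
    TensorProduct.map LinearMap.id (piMap i p) w
      = (Algebra.TensorProduct.map (AlgHom.id k B)
          (((i : A →ₐ[k] B)).comp ((p : B →ₐ[k] A)))) w := by
  induction w using TensorProduct.induction_on with
  | zero => simp
  | tmul x y =>
      show x ⊗ₜ[k] (i.toLinearMap ∘ₗ p.toLinearMap) y = _
      simp [Algebra.TensorProduct.map_tmul]
      rfl
  | add x y hx hy => rw [map_add, map_add, hx, hy]

lemma map_id_pi_mul (u v : B ⊗[k] B) :
    TensorProduct.map LinearMap.id (piMap i p) (u * v)
      = TensorProduct.map LinearMap.id (piMap i p) u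
        * TensorProduct.map LinearMap.id (piMap i p) v := by
  rw [map_id_pi_eq, map_id_pi_eq, map_id_pi_eq, map_mul]

lemma PiMap_eq_conv : PiMap i p = conv LinearMap.id
    (HopfAlgebra.antipode (R := k) ∘ₗ piMap i p) := rfl

lemma pi_antipode_pi (hsplit : ∀ a : A, p (i a) = a) (x : B) :
    piMap i p (HopfAlgebra.antipode (R := k) (piMap i p x))
      = HopfAlgebra.antipode (R := k) (piMap i p x) := by
  have h1 := LinearMap.congr_fun (pi_antipode i p) (piMap i p x)
  have h2 := LinearMap.congr_fun (pi_pi i p hsplit) x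
  simp only [LinearMap.comp_apply] at h1 h2
  rw [h1, h2]

lemma key_coinv (hsplit : ∀ a : A, p (i a) = a) :
    (TensorProduct.map LinearMap.id (piMap i p) ∘ₗ (Coalgebra.comul : B →ₗ[k] B ⊗[k] B))
        ∘ₗ PiMap i p
      = (Algebra.TensorProduct.includeLeft : B →ₐ[k] B ⊗[k] B).toLinearMap ∘ₗ PiMap i p := by
  -- abbreviations
  have hmulQ : ∀ u v : B,
      (TensorProduct.map LinearMap.id (piMap i p) ∘ₗ (Coalgebra.comul : B →ₗ[k] B ⊗[k] B)) (u * v)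
        = (TensorProduct.map LinearMap.id (piMap i p) ∘ₗ (Coalgebra.comul : B →ₗ[k] B ⊗[k] B)) u
          * (TensorProduct.map LinearMap.id (piMap i p)
              ∘ₗ (Coalgebra.comul : B →ₗ[k] B ⊗[k] B)) v := by
    intro u v
    simp only [LinearMap.comp_apply, Bialgebra.comul_mul, map_id_pi_mul]
  have hlm : ∀ x y : B,
      (Algebra.TensorProduct.includeLeft : B →ₐ[k] B ⊗[k] B).toLinearMap (x * y)
        = (Algebra.TensorProduct.includeLeft : B →ₐ[k] B ⊗[k] B).toLinearMap x
          * (Algebra.TensorProduct.includeLeft : B →ₐ[k] B ⊗[k] B).toLinearMap y := by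
    simp [map_mul]
  have hrm : ∀ x y : B,
      (Algebra.TensorProduct.includeRight : B →ₐ[k] B ⊗[k] B).toLinearMap (x * y)
        = (Algebra.TensorProduct.includeRight : B →ₐ[k] B ⊗[k] B).toLinearMap x
          * (Algebra.TensorProduct.includeRight : B →ₐ[k] B ⊗[k] B).toLinearMap y := by
    simp [map_mul]
  -- Q = conv l (r ∘ π)
  have hQ : conv (Algebra.TensorProduct.includeLeft : B →ₐ[k] B ⊗[k] B).toLinearMap
      ((Algebra.TensorProduct.includeRight : B →ₐ[k] B ⊗[k] B).toLinearMap ∘ₗ piMap i p)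
      = TensorProduct.map LinearMap.id (piMap i p) ∘ₗ (Coalgebra.comul : B →ₗ[k] B ⊗[k] B) := by
    unfold conv
    rw [show TensorProduct.map
          (Algebra.TensorProduct.includeLeft : B →ₐ[k] B ⊗[k] B).toLinearMap
          ((Algebra.TensorProduct.includeRight : B →ₐ[k] B ⊗[k] B).toLinearMap ∘ₗ piMap i p)
        = TensorProduct.map
            (Algebra.TensorProduct.includeLeft : B →ₐ[k] B ⊗[k] B).toLinearMap
            (Algebra.TensorProduct.includeRight : B →ₐ[k] B ⊗[k] B).toLinearMap
          ∘ₗ TensorProduct.map LinearMap.id (piMap i p) by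
      rw [← TensorProduct.map_comp, LinearMap.comp_id]]
    simp only [← LinearMap.comp_assoc]
    rw [mul'_comp_map_incl]
    simp only [LinearMap.id_comp]
  -- Q ∘ (S ∘ π) = conv (r ∘ S ∘ π) (l ∘ S ∘ π)
  have hmaps2 : TensorProduct.map (piMap i p) LinearMap.id
      ∘ₗ (TensorProduct.map (HopfAlgebra.antipode (R := k)) (HopfAlgebra.antipode (R := k))
        ∘ₗ TensorProduct.map (piMap i p) (piMap i p))
      = TensorProduct.map (HopfAlgebra.antipode (R := k) ∘ₗ piMap i p)
          (HopfAlgebra.antipode (R := k) ∘ₗ piMap i p) := by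
    apply TensorProduct.ext'
    intro x y
    simp [pi_antipode_pi i p hsplit]
  have hswap : TensorProduct.map LinearMap.id (piMap i p)
      ∘ₗ (TensorProduct.comm k B B).toLinearMap
      = (TensorProduct.comm k B B).toLinearMap
        ∘ₗ TensorProduct.map (piMap i p) LinearMap.id := by
    apply TensorProduct.ext'
    intro x y
    simp
  have hQS : (TensorProduct.map LinearMap.id (piMap i p)
        ∘ₗ (Coalgebra.comul : B →ₗ[k] B ⊗[k] B))
        ∘ₗ (HopfAlgebra.antipode (R := k) ∘ₗ piMap i p)
      = conv ((Algebra.TensorProduct.includeRight : B →ₐ[k] B ⊗[k] B).toLinearMap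
          ∘ₗ (HopfAlgebra.antipode (R := k) ∘ₗ piMap i p))
        ((Algebra.TensorProduct.includeLeft : B →ₐ[k] B ⊗[k] B).toLinearMap
          ∘ₗ (HopfAlgebra.antipode (R := k) ∘ₗ piMap i p)) := by
    have hrhs : conv ((Algebra.TensorProduct.includeRight : B →ₐ[k] B ⊗[k] B).toLinearMap
          ∘ₗ (HopfAlgebra.antipode (R := k) ∘ₗ piMap i p))
        ((Algebra.TensorProduct.includeLeft : B →ₐ[k] B ⊗[k] B).toLinearMap
          ∘ₗ (HopfAlgebra.antipode (R := k) ∘ₗ piMap i p))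
        = (TensorProduct.comm k B B).toLinearMap
          ∘ₗ TensorProduct.map (HopfAlgebra.antipode (R := k) ∘ₗ piMap i p)
              (HopfAlgebra.antipode (R := k) ∘ₗ piMap i p)
          ∘ₗ (Coalgebra.comul : B →ₗ[k] B ⊗[k] B) := by
      unfold conv
      rw [TensorProduct.map_comp]
      simp only [← LinearMap.comp_assoc]
      rw [mul'_comp_map_incl_rev]
    rw [hrhs]
    -- left-hand side computation
    simp only [LinearMap.comp_assoc]
    rw [← LinearMap.comp_assoc (piMap i p) (HopfAlgebra.antipode (R := k))
      (Coalgebra.comul : B →ₗ[k] B ⊗[k] B), comul_antipode]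
    simp only [LinearMap.comp_assoc]
    rw [comul_pi i p]
    simp only [← LinearMap.comp_assoc]
    rw [hswap]
    simp only [LinearMap.comp_assoc]
    rw [← LinearMap.comp_assoc (Coalgebra.comul : B →ₗ[k] B ⊗[k] B)
        (TensorProduct.map (piMap i p) (piMap i p))
        (TensorProduct.map (HopfAlgebra.antipode (R := k)) (HopfAlgebra.antipode (R := k))),
      ← LinearMap.comp_assoc (Coalgebra.comul : B →ₗ[k] B ⊗[k] B) _
        (TensorProduct.map (piMap i p) LinearMap.id),
      hmaps2]
  -- the inner convolution collapses to the unit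
  have hinner : conv ((Algebra.TensorProduct.includeRight : B →ₐ[k] B ⊗[k] B).toLinearMap
        ∘ₗ piMap i p)
      ((Algebra.TensorProduct.includeRight : B →ₐ[k] B ⊗[k] B).toLinearMap
        ∘ₗ (HopfAlgebra.antipode (R := k) ∘ₗ piMap i p)) = cunit := by
    have h3 : conv (piMap i p) (HopfAlgebra.antipode (R := k) ∘ₗ piMap i p) = cunit := by
      have h4 := conv_comp LinearMap.id (HopfAlgebra.antipode (R := k)) (piMap i p)
        (comul_pi i p)
      rw [id_conv_antipode, LinearMap.id_comp, cunit_comp _ (counit_pi i p)] at h4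
      exact h4.symm
    have h2 := comp_conv (Algebra.TensorProduct.includeRight : B →ₐ[k] B ⊗[k] B).toLinearMap
      hrm (piMap i p) (HopfAlgebra.antipode (R := k) ∘ₗ piMap i p)
    rw [h3] at h2
    rw [← h2]
    exact comp_cunit _ fun r => (Algebra.TensorProduct.includeRight).commutes r
  -- put everything together
  have h1 := comp_conv (TensorProduct.map LinearMap.id (piMap i p)
      ∘ₗ (Coalgebra.comul : B →ₗ[k] B ⊗[k] B)) hmulQ
    LinearMap.id (HopfAlgebra.antipode (R := k) ∘ₗ piMap i p)
  rw [LinearMap.comp_id] at h1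
  rw [PiMap_eq_conv, h1, hQS, ← hQ, conv_assoc,
    ← conv_assoc ((Algebra.TensorProduct.includeRight : B →ₐ[k] B ⊗[k] B).toLinearMap
      ∘ₗ piMap i p), hinner, cunit_conv]
  have hfin := comp_conv (Algebra.TensorProduct.includeLeft : B →ₐ[k] B ⊗[k] B).toLinearMap
    hlm LinearMap.id (HopfAlgebra.antipode (R := k) ∘ₗ piMap i p)
  rw [LinearMap.comp_id] at hfin
  rw [← hfin]

end Split

end SplitHopfAux

/-- For a split pair of Hopf algebras `(A, B, i, p)`, `L = Π(B)` is a unital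
subalgebra of `B`: `1 ∈ L` and `L` is closed under multiplication (equivalently,
`Π(Π(b) · Π(b')) = Π(b) · Π(b')` for all `b, b' ∈ B`). -/
theorem statement7 (i : A →ₐc[k] B) (p : B →ₐc[k] A) (hsplit : ∀ a : A, p (i a) = a) :
    ((1 : B) ∈ LinearMap.range (PiMap i p)) ∧
    (∀ x y : B, PiMap i p x = x → PiMap i p y = y → PiMap i p (x * y) = x * y) ∧
    (∀ b b' : B, PiMap i p (PiMap i p b * PiMap i p b') = PiMap i p b * PiMap i p b') := by
  classical
  -- `Π b = m (id ⊗ S) (id ⊗ π) Δ b`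
  have hPz : ∀ z : B, PiMap i p z
      = LinearMap.mul' k B (TensorProduct.map LinearMap.id (HopfAlgebra.antipode (R := k))
          (TensorProduct.map LinearMap.id (piMap i p) (Coalgebra.comul z))) := by
    intro z
    have hcmp : TensorProduct.map (LinearMap.id : B →ₗ[k] B) (HopfAlgebra.antipode (R := k))
        ∘ₗ TensorProduct.map (LinearMap.id : B →ₗ[k] B) (piMap i p)
        = TensorProduct.map (LinearMap.id : B →ₗ[k] B)
            (HopfAlgebra.antipode (R := k) ∘ₗ piMap i p) := by
      rw [← TensorProduct.map_comp, LinearMap.id_comp]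
    rw [show PiMap i p z = LinearMap.mul' k B
        (TensorProduct.map LinearMap.id (HopfAlgebra.antipode (R := k) ∘ₗ piMap i p)
          (Coalgebra.comul z)) from rfl, ← hcmp, LinearMap.comp_apply]
  -- the image of `Π` consists of coinvariants
  have hkey : ∀ b : B, TensorProduct.map LinearMap.id (piMap i p)
      (Coalgebra.comul (PiMap i p b)) = PiMap i p b ⊗ₜ[k] 1 := by
    intro b
    have h := LinearMap.congr_fun (SplitHopfAux.key_coinv i p hsplit) b
    simpa using h
  -- coinvariance implies the multiplicativity property
  have hmul : ∀ x y : B,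
      TensorProduct.map LinearMap.id (piMap i p) (Coalgebra.comul x) = x ⊗ₜ[k] 1 →
      PiMap i p (x * y) = x * PiMap i p y := by
    intro x y hx
    rw [hPz (x * y), Bialgebra.comul_mul, SplitHopfAux.map_id_pi_mul, hx, hPz y]
    induction (TensorProduct.map LinearMap.id (piMap i p) (Coalgebra.comul y)) using
        TensorProduct.induction_on with
    | zero => simp
    | tmul u v =>
        simp [Algebra.TensorProduct.tmul_mul_tmul, mul_assoc]
    | add u v hu hv =>
        rw [mul_add, map_add, map_add, map_add, map_add, mul_add, hu, hv]
  -- `Π` is idempotent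
  have hfix : ∀ b : B, PiMap i p (PiMap i p b) = PiMap i p b := by
    intro b
    rw [hPz (PiMap i p b), hkey b]
    simp [SplitHopfAux.antipode_one]
  -- `Π 1 = 1`
  have hone : PiMap i p (1 : B) = 1 := by
    have hπ1 : piMap i p (1 : B) = 1 := by
      show i (p 1) = 1
      simp
    rw [hPz 1]
    simp [Algebra.TensorProduct.one_def, hπ1, SplitHopfAux.antipode_one]
  refine ⟨⟨1, hone⟩, ?_, ?_⟩
  · intro x y hx hy
    have hx' : TensorProduct.map LinearMap.id (piMap i p) (Coalgebra.comul x) = x ⊗ₜ[k] 1 := by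
      have h := hkey x
      rw [hx] at h
      exact h
    rw [hmul x y hx', hy]
  · intro b b'
    have hx' : TensorProduct.map LinearMap.id (piMap i p)
        (Coalgebra.comul (PiMap i p b)) = PiMap i p b ⊗ₜ[k] 1 := hkey b
    rw [hmul _ _ hx', hfix b']
end
end

section
/- Let (A, B, i, p) be a split pair of Hopf algebras with invertible antipode, and let L carry the Drinfeld–Yetter B-module structure π_L(b ⊗ x) = Σ b₍₁₎ · x · S(π(b₍₂₎)), π_L*(x) = Σ x₍₃₎ · S⁻¹(x₍₁₎) ⊗ x₍₂₎. For every Drinfeld–Yetter B-module (V, ρ, ρ*), the assignment g ↦ g(1) is a bijection from the set of linear maps g : L → V that are simultaneously B-module maps and B-comodule maps, onto the set { v ∈ V : ρ*(v) = 1 ⊗ v and ρ(i(a) ⊗ v) = ε(a)·v for all a ∈ A }; its inverse sends v to the map x ↦ ρ(x ⊗ v). -/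
open TensorProduct

noncomputable section

variable {k : Type} [Field k]
variable {A : Type} [Ring A] [HopfAlgebra k A]
variable {B : Type} [Ring B] [HopfAlgebra k B]

/-- The twice-iterated comultiplication `Δ⁽³⁾ = (Δ ⊗ id) ∘ Δ : B → (B ⊗ B) ⊗ B`. -/
def Delta3 : B →ₗ[k] (B ⊗[k] B) ⊗[k] B :=
  LinearMap.rTensor B (Coalgebra.comul : B →ₗ[k] B ⊗[k] B) ∘ₗ
    (Coalgebra.comul : B →ₗ[k] B ⊗[k] B)

/-- The map `θ : B → B ⊗ B`, `θ(b) = Σ x₍₃₎ · S⁻¹(x₍₁₎) ⊗ x₍₂₎` where `x = Π(b)` and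
`Δ⁽³⁾(x) = Σ x₍₁₎ ⊗ x₍₂₎ ⊗ x₍₃₎`; restricted to `L` this is the coaction `π_L*`. -/
def theta (i : A →ₐc[k] B) (p : B →ₐc[k] A) (S' : B →ₗ[k] B) : B →ₗ[k] B ⊗[k] B :=
  TensorProduct.map (LinearMap.mul' k B ∘ₗ LinearMap.lTensor B S') LinearMap.id ∘ₗ
  (TensorProduct.assoc k B B B).symm.toLinearMap ∘ₗ
  (TensorProduct.comm k (B ⊗[k] B) B).toLinearMap ∘ₗ
  Delta3 ∘ₗ PiMap i p

/-- A Drinfeld–Yetter module over a Hopf algebra `B` whose antipode has inverse `S'`: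
a left `B`-module structure `act` on `V` together with a right `B`-comodule structure
`coact : V → B ⊗ V` (in the conventions `((1 2)∘Δ ⊗ id) ∘ ρ* = (id ⊗ ρ*) ∘ ρ*` and
`(ε ⊗ id) ∘ ρ* = id`), satisfying the compatibility
`ρ*(b·v) = Σ b₍₃₎ v₍₋₁₎ S⁻¹(b₍₁₎) ⊗ b₍₂₎·v₍₀₎`, where `Δ⁽³⁾ = (Δ ⊗ id) ∘ Δ` and
`ρ*(v) = Σ v₍₋₁₎ ⊗ v₍₀₎` (stated in Sweedler form, for all finite representations of the
relevant tensors). -/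
structure IsDrinfeldYetter {R : Type} [CommRing R] {B : Type} [Ring B] [HopfAlgebra R B]
    (S' : B →ₗ[R] B) {V : Type} [AddCommGroup V] [Module R V]
    (act : B →ₗ[R] V →ₗ[R] V) (coact : V →ₗ[R] B ⊗[R] V) : Prop where
  act_mul : ∀ (b b' : B) (v : V), act (b * b') v = act b (act b' v)
  act_one : ∀ v : V, act 1 v = v
  coassoc : (TensorProduct.assoc R B B V).toLinearMap ∘ₗ
      TensorProduct.map ((TensorProduct.comm R B B).toLinearMap ∘ₗ
        (Coalgebra.comul : B →ₗ[R] B ⊗[R] B)) LinearMap.id ∘ₗ coact =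
    LinearMap.lTensor B coact ∘ₗ coact
  counit_coact : (TensorProduct.lid R V).toLinearMap ∘ₗ
      TensorProduct.map (Coalgebra.counit : B →ₗ[R] R) LinearMap.id ∘ₗ coact = LinearMap.id
  compat : ∀ (b : B) (v : V)
      (ι₁ : Type) (s₁ : Finset ι₁) (x y : ι₁ → B),
      Coalgebra.comul (R := R) b = ∑ i ∈ s₁, x i ⊗ₜ[R] y i →
      ∀ (ι₂ : Type) (s₂ : ι₁ → Finset ι₂) (x₁ x₂ : ι₁ → ι₂ → B),
      (∀ i ∈ s₁, Coalgebra.comul (R := R) (x i) = ∑ j ∈ s₂ i, x₁ i j ⊗ₜ[R] x₂ i j) →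
      ∀ (ι₃ : Type) (s₃ : Finset ι₃) (w : ι₃ → B) (u : ι₃ → V),
      coact v = ∑ l ∈ s₃, w l ⊗ₜ[R] u l →
      coact (act b v) =
        ∑ i ∈ s₁, ∑ j ∈ s₂ i, ∑ l ∈ s₃,
          (y i * w l * S' (x₁ i j)) ⊗ₜ[R] act (x₂ i j) (u l)


namespace St10

open Coalgebra HopfAlgebra

section hopf
variable {H : Type} [Ring H] [HopfAlgebra k H]

lemma antipode_one : (HopfAlgebra.antipode k : H →ₗ[k] H) 1 = 1 := by
  have h := mul_antipode_lTensor_comul_apply (R := k) (A := H) 1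
  simpa [Bialgebra.comul_one, Algebra.TensorProduct.one_def] using h

lemma sum_counit_smul_left {a : H} {ι : Type} {s : Finset ι} {xl xr : ι → H}
    (h : Coalgebra.comul (R := k) a = ∑ i ∈ s, xl i ⊗ₜ[k] xr i) :
    ∑ i ∈ s, Coalgebra.counit (R := k) (xr i) • xl i = a := by
  have h2 := Coalgebra.sum_tmul_counit_eq (R := k) (⟨s, xl, xr, h.symm⟩ : Coalgebra.Repr k a ι)
  have h3 := congrArg (TensorProduct.rid k H) h2
  simpa [map_sum, TensorProduct.rid_tmul] using h3

lemma sum_counit_smul_right {a : H} {ι : Type} {s : Finset ι} {xl xr : ι → H}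
    (h : Coalgebra.comul (R := k) a = ∑ i ∈ s, xl i ⊗ₜ[k] xr i) :
    ∑ i ∈ s, Coalgebra.counit (R := k) (xl i) • xr i = a := by
  have h2 := Coalgebra.sum_counit_tmul_eq (R := k) (⟨s, xl, xr, h.symm⟩ : Coalgebra.Repr k a ι)
  have h3 := congrArg (TensorProduct.lid k H) h2
  simpa [map_sum, TensorProduct.lid_tmul] using h3

lemma sum_antipode_mul {a : H} {ι : Type} {s : Finset ι} {xl xr : ι → H}
    (h : Coalgebra.comul (R := k) a = ∑ i ∈ s, xl i ⊗ₜ[k] xr i) :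
    ∑ i ∈ s, (HopfAlgebra.antipode k : H →ₗ[k] H) (xl i) * xr i =
      Coalgebra.counit (R := k) a • 1 :=
  HopfAlgebra.sum_antipode_mul_eq_smul (⟨s, xl, xr, h.symm⟩ : Coalgebra.Repr k a ι)

lemma counit_antipode (a : H) :
    Coalgebra.counit (R := k) ((HopfAlgebra.antipode k : H →ₗ[k] H) a) =
      Coalgebra.counit (R := k) a := by
  obtain ⟨s, hs⟩ := TensorProduct.exists_finset (R := k) (Coalgebra.comul (R := k) a)
  have h1 : (HopfAlgebra.antipode k : H →ₗ[k] H) a =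
      ∑ q ∈ s, Coalgebra.counit (R := k) q.2 • (HopfAlgebra.antipode k : H →ₗ[k] H) q.1 := by
    conv_lhs => rw [← sum_counit_smul_left (k := k) hs]
    simp [map_sum]
  have h2 := congrArg (Coalgebra.counit (R := k)) (sum_antipode_mul (k := k) hs)
  simp only [map_sum, Bialgebra.counit_mul] at h2
  rw [h1, map_sum]
  simp only [map_smul]
  calc ∑ q ∈ s, Coalgebra.counit (R := k) q.2 •
        Coalgebra.counit (R := k) ((HopfAlgebra.antipode k : H →ₗ[k] H) q.1)
      = ∑ q ∈ s, Coalgebra.counit (R := k) ((HopfAlgebra.antipode k : H →ₗ[k] H) q.1) *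
          Coalgebra.counit (R := k) q.2 := by
        refine Finset.sum_congr rfl fun q _ => ?_
        rw [smul_eq_mul, mul_comm]
    _ = Coalgebra.counit (R := k) a := by
        rw [h2]; simp

end hopf

section hom

/-- Push a Sweedler representation forward along a bialgebra morphism. -/
def pushRepr (f : A →ₐc[k] B) {a : A} {ι : Type} (r : Coalgebra.Repr k a ι) : Coalgebra.Repr k (f a) ι where
  index := r.index
  left := fun j => f (r.left j)
  right := fun j => f (r.right j)
  eq := by
    have h := CoalgHomClass.map_comp_comul_apply f a
    rw [← h, ← r.eq, map_sum]
    simp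

lemma map_antipode (f : A →ₐc[k] B) (a : A) :
    (HopfAlgebra.antipode k : B →ₗ[k] B) (f a) = f ((HopfAlgebra.antipode k : A →ₗ[k] A) a) := by
  classical
  set SA := (HopfAlgebra.antipode k : A →ₗ[k] A)
  set SB := (HopfAlgebra.antipode k : B →ₗ[k] B)
  set r := Coalgebra.Repr.arbitrary k a with hr
  set r₁ : ∀ j : r.ι, Coalgebra.Repr k (r.left j) (A × A) := fun j => Coalgebra.Repr.arbitrary k _
  set r₂ : ∀ j : r.ι, Coalgebra.Repr k (r.right j) (A × A) := fun j => Coalgebra.Repr.arbitrary k _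
  have key := Coalgebra.sum_tmul_tmul_eq (R := k) r r₁ r₂
  set Φ : A ⊗[k] (A ⊗[k] A) →ₗ[k] B :=
    LinearMap.mul' k B ∘ₗ
      TensorProduct.map (SB ∘ₗ f.toLinearMap)
        (LinearMap.mul' k B ∘ₗ TensorProduct.map f.toLinearMap (f.toLinearMap ∘ₗ SA)) with hΦ
  have key2 := congrArg Φ key
  simp only [map_sum, hΦ, LinearMap.comp_apply, TensorProduct.map_tmul,
    LinearMap.mul'_apply, BialgHom.coe_toLinearMap, CoalgHom.coe_toLinearMap] at key2
  simp only [show ∀ x : A, f.toLinearMap x = f x from fun _ => rfl] at key2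
  have lhs_eq : ∑ j ∈ r.index, ∑ l ∈ (r₁ j).index,
      SB (f ((r₁ j).left l)) * (f ((r₁ j).right l) * f (SA (r.right j))) = f (SA a) := by
    have inner : ∀ j ∈ r.index, ∑ l ∈ (r₁ j).index,
        SB (f ((r₁ j).left l)) * (f ((r₁ j).right l) * f (SA (r.right j))) =
        Coalgebra.counit (R := k) (r.left j) • f (SA (r.right j)) := by
      intro j _
      have collapse := HopfAlgebra.sum_antipode_mul_eq_smul (R := k) (pushRepr f (r₁ j))
      simp only [pushRepr] at collapse
      calc ∑ l ∈ (r₁ j).index,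
            SB (f ((r₁ j).left l)) * (f ((r₁ j).right l) * f (SA (r.right j)))
          = (∑ l ∈ (r₁ j).index, SB (f ((r₁ j).left l)) * f ((r₁ j).right l)) *
              f (SA (r.right j)) := by
            rw [Finset.sum_mul]; exact Finset.sum_congr rfl fun l _ => (mul_assoc _ _ _).symm
        _ = (Coalgebra.counit (R := k) (f (r.left j)) • (1 : B)) * f (SA (r.right j)) := by
            rw [collapse]
        _ = Coalgebra.counit (R := k) (r.left j) • f (SA (r.right j)) := by
            rw [CoalgHomClass.counit_comp_apply, smul_mul_assoc, one_mul]
    rw [Finset.sum_congr rfl inner]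
    simp only [← map_smul, ← map_sum]
    rw [sum_counit_smul_right (k := k) r.eq.symm]
  have rhs_eq : ∑ j ∈ r.index, ∑ l ∈ (r₂ j).index,
      SB (f (r.left j)) * (f ((r₂ j).left l) * f (SA ((r₂ j).right l))) = SB (f a) := by
    have inner : ∀ j ∈ r.index, ∑ l ∈ (r₂ j).index,
        SB (f (r.left j)) * (f ((r₂ j).left l) * f (SA ((r₂ j).right l))) =
        Coalgebra.counit (R := k) (r.right j) • SB (f (r.left j)) := by
      intro j _
      have collapse := HopfAlgebra.sum_mul_antipode_eq_smul (R := k) (r₂ j)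
      calc ∑ l ∈ (r₂ j).index, SB (f (r.left j)) * (f ((r₂ j).left l) * f (SA ((r₂ j).right l)))
          = SB (f (r.left j)) * ∑ l ∈ (r₂ j).index, f ((r₂ j).left l * SA ((r₂ j).right l)) := by
            rw [Finset.mul_sum]; exact Finset.sum_congr rfl fun l _ => by rw [map_mul]
        _ = SB (f (r.left j)) * f (Coalgebra.counit (R := k) (r.right j) • (1 : A)) := by
            rw [← map_sum, collapse]
        _ = Coalgebra.counit (R := k) (r.right j) • SB (f (r.left j)) := by
            rw [map_smul, map_one, mul_smul_comm, mul_one]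
    rw [Finset.sum_congr rfl inner]
    simp only [← map_smul, ← map_sum]
    rw [sum_counit_smul_left (k := k) r.eq.symm]
  rw [lhs_eq, rhs_eq] at key2
  exact key2.symm

end hom

section split
variable (i : A →ₐc[k] B) (p : B →ₐc[k] A)

@[simp] lemma piMap_apply (b : B) : piMap i p b = i (p b) := rfl

lemma PiMap_sum {b : B} {ι : Type} {s : Finset ι} {xl xr : ι → B}
    (h : Coalgebra.comul (R := k) b = ∑ j ∈ s, xl j ⊗ₜ[k] xr j) :
    PiMap i p b = ∑ j ∈ s, xl j * (HopfAlgebra.antipode k : B →ₗ[k] B) (i (p (xr j))) := by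
  unfold PiMap
  simp only [LinearMap.comp_apply, h, map_sum, TensorProduct.map_tmul, LinearMap.id_coe, id_eq,
    LinearMap.mul'_apply, piMap_apply]

lemma adActT_sum {b : B} (c : B) {ι : Type} {s : Finset ι} {xl xr : ι → B}
    (h : Coalgebra.comul (R := k) b = ∑ j ∈ s, xl j ⊗ₜ[k] xr j) :
    adActT i p (b ⊗ₜ[k] c) =
      ∑ j ∈ s, xl j * c * (HopfAlgebra.antipode k : B →ₗ[k] B) (i (p (xr j))) := by
  unfold adActT
  simp only [LinearMap.comp_apply, LinearMap.rTensor_tmul, LinearMap.comp_apply, h, map_sum,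
    LinearMap.lTensor_tmul, TensorProduct.sum_tmul, LinearEquiv.coe_coe,
    TensorProduct.assoc_tmul, TensorProduct.comm_tmul, TensorProduct.assoc_symm_tmul,
    LinearMap.mul'_apply, piMap_apply]

lemma comul_one' : Coalgebra.comul (R := k) (1 : B) = (1 : B) ⊗ₜ[k] (1 : B) := by
  rw [Bialgebra.comul_one, Algebra.TensorProduct.one_def]

lemma PiMap_one : PiMap i p (1 : B) = 1 := by
  have h : Coalgebra.comul (R := k) (1 : B) = ∑ _j ∈ ({0} : Finset ℕ), (1:B) ⊗ₜ[k] (1:B) := by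
    simpa using comul_one' (k := k) (B := B)
  rw [PiMap_sum i p h]
  simp [antipode_one]

lemma adActT_one (b : B) : adActT i p (b ⊗ₜ[k] 1) = PiMap i p b := by
  obtain ⟨s, hs⟩ := TensorProduct.exists_finset (R := k) (Coalgebra.comul (R := k) b)
  rw [adActT_sum i p 1 hs, PiMap_sum i p hs]
  simp [mul_one]

lemma PiMap_i (hsplit : ∀ a : A, p (i a) = a) (a : A) :
    PiMap i p (i a) = Coalgebra.counit (R := k) a • 1 := by
  classical
  set r := Coalgebra.Repr.arbitrary k a with hr
  have h : Coalgebra.comul (R := k) (i a) =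
      ∑ j ∈ r.index, i (r.left j) ⊗ₜ[k] i (r.right j) := (pushRepr i r).eq.symm
  rw [PiMap_sum i p h]
  have : ∀ j ∈ r.index, i (r.left j) * (HopfAlgebra.antipode k : B →ₗ[k] B) (i (p (i (r.right j))))
      = i (r.left j) * (HopfAlgebra.antipode k : B →ₗ[k] B) (i (r.right j)) := by
    intro j _
    rw [hsplit]
  rw [Finset.sum_congr rfl this]
  have collapse := HopfAlgebra.sum_mul_antipode_eq_smul (R := k) (pushRepr i r)
  simp only [pushRepr] at collapse
  rw [collapse, CoalgHomClass.counit_comp_apply]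

lemma theta_sum (S' : B →ₗ[k] B) {x : B} (hx : PiMap i p x = x)
    {ι₁ : Type} {s₁ : Finset ι₁} {xl xr : ι₁ → B}
    (h₁ : Coalgebra.comul (R := k) x = ∑ q ∈ s₁, xl q ⊗ₜ[k] xr q)
    {ι₂ : Type} {s₂ : ι₁ → Finset ι₂} {x1 x2 : ι₁ → ι₂ → B}
    (h₂ : ∀ q ∈ s₁, Coalgebra.comul (R := k) (xl q) = ∑ j ∈ s₂ q, x1 q j ⊗ₜ[k] x2 q j) :
    theta i p S' x = ∑ q ∈ s₁, ∑ j ∈ s₂ q, (xr q * S' (x1 q j)) ⊗ₜ[k] x2 q j := by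
  unfold theta Delta3
  simp only [LinearMap.comp_apply, hx, h₁, map_sum]
  rw [Finset.sum_congr rfl fun q hq => by
    rw [LinearMap.rTensor_tmul, h₂ q hq]]
  simp only [TensorProduct.sum_tmul, map_sum, LinearEquiv.coe_coe, TensorProduct.comm_tmul,
    TensorProduct.tmul_sum, TensorProduct.assoc_symm_tmul, TensorProduct.map_tmul,
    LinearMap.comp_apply, LinearMap.lTensor_tmul, LinearMap.mul'_apply, LinearMap.id_coe, id_eq]

lemma theta_one (S' : B →ₗ[k] B) (hS'one : S' 1 = 1) :
    theta i p S' (1 : B) = (1 : B) ⊗ₜ[k] (1 : B) := by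
  have h : Coalgebra.comul (R := k) (1 : B) = ∑ _j ∈ ({0} : Finset ℕ), (1:B) ⊗ₜ[k] (1:B) := by
    simpa using comul_one' (k := k) (B := B)
  rw [theta_sum i p S' (PiMap_one i p) h (fun q _ => h)]
  simp [hS'one]

end split

end St10

/-- Universal property of `L`: for every Drinfeld–Yetter `B`-module
`(V, ρ, ρ*)`, the assignment `g ↦ g(1)` is a bijection from the set of linear maps `L → V`
that are simultaneously `B`-module and `B`-comodule maps (encoded as linear maps `g : B → V`
factoring through `Π`) onto `{v ∈ V | ρ*(v) = 1 ⊗ v and ρ(i(a) ⊗ v) = ε(a)·v for all a ∈ A}`;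
its inverse sends `v` to the map `x ↦ ρ(x ⊗ v)` (for `x ∈ L`). -/
theorem statement10 (i : A →ₐc[k] B) (p : B →ₐc[k] A) (hsplit : ∀ a : A, p (i a) = a)
    (S' : B →ₗ[k] B)
    (hS'₁ : S' ∘ₗ (HopfAlgebra.antipode k : B →ₗ[k] B) = LinearMap.id)
    (hS'₂ : (HopfAlgebra.antipode k : B →ₗ[k] B) ∘ₗ S' = LinearMap.id)
    {V : Type} [AddCommGroup V] [Module k V]
    (act : B →ₗ[k] V →ₗ[k] V) (coact : V →ₗ[k] B ⊗[k] V)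
    (hDY : IsDrinfeldYetter S' act coact) :
    -- `g ↦ g(1)` is a bijection between the two sets
    Set.BijOn (fun g : B →ₗ[k] V => g 1)
      {g : B →ₗ[k] V |
        (∀ x : B, g (PiMap i p x) = g x) ∧
        (∀ (b x : B), PiMap i p x = x → g (adActT i p (b ⊗ₜ[k] x)) = act b (g x)) ∧
        (∀ x : B, PiMap i p x = x → LinearMap.lTensor B g (theta i p S' x) = coact (g x))}
      {v : V | coact v = (1 : B) ⊗ₜ[k] v ∧
        ∀ a : A, act (i a) v = Coalgebra.counit (R := k) a • v} ∧
    -- the inverse sends `v` to the map `x ↦ ρ(x ⊗ v)` on `L`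
    (∀ v : V, coact v = (1 : B) ⊗ₜ[k] v →
      (∀ a : A, act (i a) v = Coalgebra.counit (R := k) a • v) →
      (act.flip v ∘ₗ PiMap i p) ∈
        {g : B →ₗ[k] V |
          (∀ x : B, g (PiMap i p x) = g x) ∧
          (∀ (b x : B), PiMap i p x = x → g (adActT i p (b ⊗ₜ[k] x)) = act b (g x)) ∧
          (∀ x : B, PiMap i p x = x → LinearMap.lTensor B g (theta i p S' x) = coact (g x))} ∧
      (act.flip v ∘ₗ PiMap i p) 1 = v) ∧
    (∀ g : B →ₗ[k] V,
      (∀ x : B, g (PiMap i p x) = g x) →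
      (∀ (b x : B), PiMap i p x = x → g (adActT i p (b ⊗ₜ[k] x)) = act b (g x)) →
      (∀ x : B, PiMap i p x = x → LinearMap.lTensor B g (theta i p S' x) = coact (g x)) →
      ∀ x : B, PiMap i p x = x → g x = act x (g 1)) := by
  classical
  have hS'one : S' (1 : B) = 1 := by
    have h := LinearMap.congr_fun hS'₁ (1 : B)
    simpa [St10.antipode_one] using h
  -- any simultaneous module/comodule map is determined by its value at 1
  have hG : ∀ g : B →ₗ[k] V, (∀ x : B, g (PiMap i p x) = g x) →
      (∀ b x : B, PiMap i p x = x → g (adActT i p (b ⊗ₜ[k] x)) = act b (g x)) →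
      ∀ b : B, g b = act b (g 1) := by
    intro g h1 h2 b
    have h := h2 b 1 (St10.PiMap_one i p)
    rw [St10.adActT_one i p b, h1 b] at h
    exact h
  -- the action of `S (π b)` on an `A`-invariant vector
  have hSpi : ∀ v : V, (∀ a : A, act (i a) v = Coalgebra.counit (R := k) a • v) →
      ∀ b : B, act ((HopfAlgebra.antipode k : B →ₗ[k] B) (i (p b))) v =
        Coalgebra.counit (R := k) b • v := by
    intro v hv2 b
    rw [St10.map_antipode i (p b), hv2, St10.counit_antipode, CoalgHomClass.counit_comp_apply]
  -- key: `act (Π u) v = act u v` for `A`-invariant `v`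
  have hKey : ∀ v : V, (∀ a : A, act (i a) v = Coalgebra.counit (R := k) a • v) →
      ∀ u : B, act (PiMap i p u) v = act u v := by
    intro v hv2 u
    obtain ⟨s, hs⟩ := TensorProduct.exists_finset (R := k) (Coalgebra.comul (R := k) u)
    rw [St10.PiMap_sum i p hs, map_sum, LinearMap.sum_apply]
    have step : ∀ q ∈ s, act (q.1 * (HopfAlgebra.antipode k : B →ₗ[k] B) (i (p q.2))) v =
        Coalgebra.counit (R := k) q.2 • act q.1 v := by
      intro q _
      rw [hDY.act_mul, hSpi v hv2 q.2, map_smul]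
    rw [Finset.sum_congr rfl step]
    conv_rhs => rw [← St10.sum_counit_smul_left (k := k) hs]
    rw [map_sum, LinearMap.sum_apply]
    exact Finset.sum_congr rfl fun q _ => by rw [map_smul, LinearMap.smul_apply]
  -- the inverse construction
  have hInv : ∀ v : V, coact v = (1 : B) ⊗ₜ[k] v →
      (∀ a : A, act (i a) v = Coalgebra.counit (R := k) a • v) →
      (act.flip v ∘ₗ PiMap i p) ∈
        {g : B →ₗ[k] V |
          (∀ x : B, g (PiMap i p x) = g x) ∧
          (∀ (b x : B), PiMap i p x = x → g (adActT i p (b ⊗ₜ[k] x)) = act b (g x)) ∧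
          (∀ x : B, PiMap i p x = x → LinearMap.lTensor B g (theta i p S' x) = coact (g x))} ∧
      (act.flip v ∘ₗ PiMap i p) 1 = v := by
    intro v hv1 hv2
    have hg_apply : ∀ u : B, (act.flip v ∘ₗ PiMap i p) u = act u v := by
      intro u
      rw [LinearMap.comp_apply, LinearMap.flip_apply]
      exact hKey v hv2 u
    refine ⟨⟨?_, ?_, ?_⟩, ?_⟩
    · intro x
      rw [hg_apply, hg_apply]
      exact hKey v hv2 x
    · intro b x hx
      rw [hg_apply, hg_apply]
      obtain ⟨s, hs⟩ := TensorProduct.exists_finset (R := k) (Coalgebra.comul (R := k) b)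
      rw [St10.adActT_sum i p x hs, map_sum, LinearMap.sum_apply]
      have step : ∀ q ∈ s,
          act (q.1 * x * (HopfAlgebra.antipode k : B →ₗ[k] B) (i (p q.2))) v =
          Coalgebra.counit (R := k) q.2 • act q.1 (act x v) := by
        intro q _
        rw [hDY.act_mul, hSpi v hv2 q.2, map_smul, hDY.act_mul]
      rw [Finset.sum_congr rfl step]
      conv_rhs => rw [← St10.sum_counit_smul_left (k := k) hs]
      rw [map_sum, LinearMap.sum_apply]
      exact Finset.sum_congr rfl fun q _ => by rw [map_smul, LinearMap.smul_apply]
    · intro x hx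
      obtain ⟨s₁, hs₁⟩ := TensorProduct.exists_finset (R := k) (Coalgebra.comul (R := k) x)
      have hF : ∀ q : B × B, ∃ t : Finset (B × B),
          Coalgebra.comul (R := k) q.1 = ∑ j ∈ t, j.1 ⊗ₜ[k] j.2 := fun q =>
        TensorProduct.exists_finset (R := k) (Coalgebra.comul (R := k) q.1)
      choose F hF2 using hF
      have hT : theta i p S' x = ∑ q ∈ s₁, ∑ j ∈ F q, (q.2 * S' j.1) ⊗ₜ[k] j.2 :=
        St10.theta_sum i p S' hx hs₁ (fun q _ => hF2 q)
      have hL : LinearMap.lTensor B (act.flip v ∘ₗ PiMap i p) (theta i p S' x) =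
          ∑ q ∈ s₁, ∑ j ∈ F q, (q.2 * S' j.1) ⊗ₜ[k] act j.2 v := by
        rw [hT]
        simp only [map_sum, LinearMap.lTensor_tmul]
        exact Finset.sum_congr rfl fun q _ => Finset.sum_congr rfl fun j _ => by
          rw [hg_apply]
      have hone : coact v = ∑ _l ∈ (Finset.univ : Finset Unit), (1 : B) ⊗ₜ[k] v := by
        simpa using hv1
      have hC := hDY.compat x v (B × B) s₁ Prod.fst Prod.snd hs₁ (B × B) F
        (fun _ j => j.1) (fun _ j => j.2) (fun q _ => hF2 q) Unit Finset.univ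
        (fun _ => 1) (fun _ => v) hone
      rw [hL, hg_apply x, hC]
      refine Finset.sum_congr rfl fun q _ => Finset.sum_congr rfl fun j _ => ?_
      simp [mul_one]
    · rw [hg_apply, hDY.act_one]
  refine ⟨⟨?_, ?_, ?_⟩, hInv, ?_⟩
  · -- MapsTo
    intro g hg
    obtain ⟨h1, h2, h3⟩ := hg
    constructor
    · have h := h3 1 (St10.PiMap_one i p)
      rw [St10.theta_one i p S' hS'one, LinearMap.lTensor_tmul] at h
      exact h.symm
    · intro a
      have h := h2 (i a) 1 (St10.PiMap_one i p)
      rw [St10.adActT_one i p (i a), St10.PiMap_i i p hsplit a, map_smul] at h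
      exact h.symm
  · -- InjOn
    intro g hg g' hg' h
    have h' : g 1 = g' 1 := h
    apply LinearMap.ext
    intro b
    rw [hG g hg.1 hg.2.1 b, hG g' hg'.1 hg'.2.1 b, h']
  · -- SurjOn
    intro v hv
    exact ⟨act.flip v ∘ₗ PiMap i p, (hInv v hv.1 hv.2).1, (hInv v hv.1 hv.2).2⟩
  · -- explicit formula
    intro g h1 h2 _h3 x _hx
    exact hG g h1 h2 x
end
end

section
/- Let B be a Hopf algebra over a commutative ring with invertible antipode, and let M̂ denote the Drinfeld–Yetter B-module whose underlying module is B, with action b ▷ x = Σ b₍₂₎ · x · S⁻¹(b₍₁₎) and coaction (1 2) ∘ Δ. For every Drinfeld–Yetter B-module (V, ρ, ρ*), the assignment g ↦ ε ∘ g is a bijection from the set of linear maps g : V → M̂ that are simultaneously B-module maps and B-comodule maps, onto the set of linear maps f : V → k satisfying f(ρ(b ⊗ v)) = ε(b) f(v) for all b ∈ B, v ∈ V; its inverse sends f to the map (id ⊗ f) ∘ ρ*. -/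
open TensorProduct

noncomputable section

variable {R : Type} [CommRing R]
variable {B : Type} [Ring B] [HopfAlgebra R B]

/-- The adjoint action `b ⊗ x ↦ Σ b₍₂₎ · x · S⁻¹(b₍₁₎)` of `B` on itself, as a linear map
`B ⊗ B → B`; this is the action of the Drinfeld–Yetter module `M̂`. -/
def adjActT (S' : B →ₗ[R] B) : B ⊗[R] B →ₗ[R] B :=
  LinearMap.mul' R B ∘ₗ
  LinearMap.rTensor B (LinearMap.mul' R B) ∘ₗ
  (TensorProduct.assoc R B B B).symm.toLinearMap ∘ₗ
  LinearMap.lTensor B (TensorProduct.comm R B B).toLinearMap ∘ₗ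
  (TensorProduct.assoc R B B B).toLinearMap ∘ₗ
  LinearMap.rTensor B
    (LinearMap.lTensor B S' ∘ₗ (TensorProduct.comm R B B).toLinearMap ∘ₗ
      (Coalgebra.comul : B →ₗ[R] B ⊗[R] B))

/-- From a Sweedler representation `Δ b = ∑ xᵢ ⊗ yᵢ` we get `∑ ε(yᵢ) • xᵢ = b`. -/
lemma sum_counit_right_smul (b : B) {ι : Type} {s : Finset ι} {x y : ι → B}
    (h : Coalgebra.comul (R := R) b = ∑ i ∈ s, x i ⊗ₜ[R] y i) :
    ∑ i ∈ s, Coalgebra.counit (R := R) (y i) • x i = b := by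
  have h1 := Coalgebra.lTensor_counit_comul (R := R) b
  rw [h, map_sum] at h1
  have h2 := congrArg (TensorProduct.rid R B) h1
  simpa [map_sum] using h2

/-- From a Sweedler representation `Δ b = ∑ xᵢ ⊗ yᵢ` we get `∑ ε(xᵢ) • yᵢ = b`. -/
lemma sum_counit_left_smul (b : B) {ι : Type} {s : Finset ι} {x y : ι → B}
    (h : Coalgebra.comul (R := R) b = ∑ i ∈ s, x i ⊗ₜ[R] y i) :
    ∑ i ∈ s, Coalgebra.counit (R := R) (x i) • y i = b := by
  have h1 := Coalgebra.rTensor_counit_comul (R := R) b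
  rw [h, map_sum] at h1
  have h2 := congrArg (TensorProduct.lid R B) h1
  simpa [map_sum] using h2

/-- The counit is invariant under the antipode. -/
lemma counit_antipode' (b : B) :
    Coalgebra.counit (R := R) (HopfAlgebra.antipode (R := R) b) =
      Coalgebra.counit (R := R) b := by
  obtain ⟨s, hs⟩ := TensorProduct.exists_finset (R := R) (Coalgebra.comul (R := R) b)
  have h1 : ∑ i ∈ s, Coalgebra.counit (R := R) i.2 • i.1 = b :=
    sum_counit_right_smul b hs
  have h2 := HopfAlgebra.mul_antipode_rTensor_comul_apply (R := R) b
  rw [hs, map_sum, map_sum] at h2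
  simp only [LinearMap.rTensor_tmul, LinearMap.mul'_apply] at h2
  calc Coalgebra.counit (R := R) (HopfAlgebra.antipode (R := R) b)
      = Coalgebra.counit (R := R)
          (HopfAlgebra.antipode (R := R) (∑ i ∈ s, Coalgebra.counit (R := R) i.2 • i.1)) := by
        rw [h1]
    _ = ∑ i ∈ s, Coalgebra.counit (R := R)
          (HopfAlgebra.antipode (R := R) i.1 * i.2) := by
        rw [map_sum, map_sum]
        refine Finset.sum_congr rfl fun i _ => ?_
        simp [mul_comm]
    _ = Coalgebra.counit (R := R)
          (∑ i ∈ s, HopfAlgebra.antipode (R := R) i.1 * i.2) := by rw [map_sum]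
    _ = Coalgebra.counit (R := R) b := by rw [h2]; simp [Algebra.linearMap_apply]

/-- The counit is invariant under the inverse of the antipode. -/
lemma counit_S' (S' : B →ₗ[R] B)
    (hS'₂ : (HopfAlgebra.antipode R : B →ₗ[R] B) ∘ₗ S' = LinearMap.id) (b : B) :
    Coalgebra.counit (R := R) (S' b) = Coalgebra.counit (R := R) b := by
  have := counit_antipode' (R := R) (S' b)
  rw [show HopfAlgebra.antipode (R := R) (S' b) = b from LinearMap.congr_fun hS'₂ b] at this
  exact this.symm

set_option maxRecDepth 10000 in
/-- Computation of the adjoint action on a pure tensor, given a Sweedler representation. -/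
lemma adjActT_tmul (S' : B →ₗ[R] B) (b c : B) {ι : Type} {s : Finset ι} {x y : ι → B}
    (h : Coalgebra.comul (R := R) b = ∑ i ∈ s, x i ⊗ₜ[R] y i) :
    adjActT S' (b ⊗ₜ[R] c) = ∑ i ∈ s, y i * c * S' (x i) := by
  rw [adjActT]
  simp only [LinearMap.coe_comp, Function.comp_apply, LinearEquiv.coe_coe,
    LinearMap.rTensor_tmul, LinearMap.lTensor_tmul, TensorProduct.comm_tmul,
    h, map_sum, TensorProduct.sum_tmul, TensorProduct.assoc_tmul,
    TensorProduct.assoc_symm_tmul, LinearMap.mul'_apply]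

/-- Auxiliary computation: applying `id ⊗ (rid ∘ (id ⊗ f))` to `assoc (z ⊗ u)`. -/
lemma lTensor_h_assoc {V : Type} [AddCommGroup V] [Module R V]
    (f : V →ₗ[R] R) (z : B ⊗[R] B) (u : V) :
    LinearMap.lTensor B ((TensorProduct.rid R B).toLinearMap ∘ₗ LinearMap.lTensor B f)
      ((TensorProduct.assoc R B B V) (z ⊗ₜ[R] u)) = f u • z := by
  induction z using TensorProduct.induction_on with
  | zero => simp
  | tmul p q =>
    simp only [TensorProduct.assoc_tmul, LinearMap.lTensor_tmul, LinearMap.coe_comp,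
      Function.comp_apply, LinearEquiv.coe_coe, TensorProduct.rid_tmul,
      TensorProduct.tmul_smul]
  | add z₁ z₂ h₁ h₂ => simp [TensorProduct.add_tmul, h₁, h₂, smul_add]

/-- The map `h = rid ∘ (id ⊗ f) : B ⊗ V → B` intertwines `(1 2) ∘ Δ` appropriately. -/
lemma comm_comul_h {V : Type} [AddCommGroup V] [Module R V] (f : V →ₗ[R] R) :
    (TensorProduct.comm R B B).toLinearMap ∘ₗ (Coalgebra.comul : B →ₗ[R] B ⊗[R] B) ∘ₗ
        ((TensorProduct.rid R B).toLinearMap ∘ₗ LinearMap.lTensor B f) =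
      LinearMap.lTensor B ((TensorProduct.rid R B).toLinearMap ∘ₗ LinearMap.lTensor B f) ∘ₗ
        (TensorProduct.assoc R B B V).toLinearMap ∘ₗ
        TensorProduct.map ((TensorProduct.comm R B B).toLinearMap ∘ₗ
          (Coalgebra.comul : B →ₗ[R] B ⊗[R] B)) LinearMap.id := by
  apply TensorProduct.ext'
  intro w u
  simp only [LinearMap.coe_comp, Function.comp_apply, LinearEquiv.coe_coe,
    TensorProduct.map_tmul, LinearMap.id_coe, id_eq, LinearMap.lTensor_tmul,
    TensorProduct.rid_tmul]
  rw [lTensor_h_assoc]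
  simp [map_smul]

/-- Universal property of `M̂` (which is `B` with the adjoint action
`b ▷ x = Σ b₍₂₎ · x · S⁻¹(b₍₁₎)` and the coaction `(1 2) ∘ Δ`): for every Drinfeld–Yetter
`B`-module `(V, ρ, ρ*)`, the assignment `g ↦ ε ∘ g` is a bijection from the set of linear maps
`g : V → M̂` that are simultaneously `B`-module and `B`-comodule maps onto the set of linear
maps `f : V → k` with `f(ρ(b ⊗ v)) = ε(b) f(v)`; its inverse sends `f` to `(id ⊗ f) ∘ ρ*`. -/
theorem statement14 (S' : B →ₗ[R] B)
    (hS'₁ : S' ∘ₗ (HopfAlgebra.antipode R : B →ₗ[R] B) = LinearMap.id)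
    (hS'₂ : (HopfAlgebra.antipode R : B →ₗ[R] B) ∘ₗ S' = LinearMap.id)
    {V : Type} [AddCommGroup V] [Module R V]
    (act : B →ₗ[R] V →ₗ[R] V) (coact : V →ₗ[R] B ⊗[R] V)
    (hDY : IsDrinfeldYetter S' act coact) :
    -- `g ↦ ε ∘ g` is a bijection between the two sets
    Set.BijOn (fun g : V →ₗ[R] B => (Coalgebra.counit : B →ₗ[R] R) ∘ₗ g)
      {g : V →ₗ[R] B |
        (∀ (b : B) (v : V), g (act b v) = adjActT S' (b ⊗ₜ[R] g v)) ∧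
        (∀ v : V, (TensorProduct.comm R B B).toLinearMap
            (Coalgebra.comul (R := R) (g v)) = LinearMap.lTensor B g (coact v))}
      {f : V →ₗ[R] R | ∀ (b : B) (v : V),
        f (act b v) = Coalgebra.counit (R := R) b * f v} ∧
    -- the inverse sends `f` to `(id ⊗ f) ∘ ρ*`
    (∀ g : V →ₗ[R] B,
      (∀ (b : B) (v : V), g (act b v) = adjActT S' (b ⊗ₜ[R] g v)) →
      (∀ v : V, (TensorProduct.comm R B B).toLinearMap
          (Coalgebra.comul (R := R) (g v)) = LinearMap.lTensor B g (coact v)) →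
      (TensorProduct.rid R B).toLinearMap ∘ₗ
          LinearMap.lTensor B ((Coalgebra.counit : B →ₗ[R] R) ∘ₗ g) ∘ₗ coact = g) ∧
    (∀ f : V →ₗ[R] R,
      (∀ (b : B) (v : V), f (act b v) = Coalgebra.counit (R := R) b * f v) →
      (∀ (b : B) (v : V),
        ((TensorProduct.rid R B).toLinearMap ∘ₗ LinearMap.lTensor B f ∘ₗ coact) (act b v) =
          adjActT S' (b ⊗ₜ[R]
            ((TensorProduct.rid R B).toLinearMap ∘ₗ LinearMap.lTensor B f ∘ₗ coact) v)) ∧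
      (∀ v : V, (TensorProduct.comm R B B).toLinearMap
          (Coalgebra.comul (R := R)
            (((TensorProduct.rid R B).toLinearMap ∘ₗ LinearMap.lTensor B f ∘ₗ coact) v)) =
        LinearMap.lTensor B
          ((TensorProduct.rid R B).toLinearMap ∘ₗ LinearMap.lTensor B f ∘ₗ coact)
          (coact v))) := by
  classical
  -- Notation: `G f = rid ∘ (id ⊗ f) ∘ coact`
  -- Key fact 3: `ε ∘ G f = f` (uses only the counit axiom for the coaction).
  have key3 : ∀ f : V →ₗ[R] R,
      (Coalgebra.counit : B →ₗ[R] R) ∘ₗ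
        ((TensorProduct.rid R B).toLinearMap ∘ₗ LinearMap.lTensor B f ∘ₗ coact) = f := by
    intro f
    ext v
    obtain ⟨t, ht⟩ := TensorProduct.exists_finset (R := R) (coact v)
    have hv : ∑ l ∈ t, Coalgebra.counit (R := R) l.1 • l.2 = v := by
      have := LinearMap.congr_fun hDY.counit_coact v
      rw [LinearMap.comp_apply, LinearMap.comp_apply, ht, map_sum, map_sum] at this
      simpa using this
    calc ((Coalgebra.counit : B →ₗ[R] R) ∘ₗ
          ((TensorProduct.rid R B).toLinearMap ∘ₗ LinearMap.lTensor B f ∘ₗ coact)) v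
        = ∑ l ∈ t, f l.2 * Coalgebra.counit (R := R) l.1 := by
          simp [ht, map_sum, mul_comm]
      _ = ∑ l ∈ t, Coalgebra.counit (R := R) l.1 * f l.2 := by
          refine Finset.sum_congr rfl fun l _ => mul_comm _ _
      _ = f v := by
          rw [← hv, map_sum]
          refine Finset.sum_congr rfl fun l _ => by simp
  -- Key fact 2: if `g` is a comodule map, then `G (ε ∘ g) = g`.
  have key2 : ∀ g : V →ₗ[R] B,
      (∀ v : V, (TensorProduct.comm R B B).toLinearMap
          (Coalgebra.comul (R := R) (g v)) = LinearMap.lTensor B g (coact v)) →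
      (TensorProduct.rid R B).toLinearMap ∘ₗ
          LinearMap.lTensor B ((Coalgebra.counit : B →ₗ[R] R) ∘ₗ g) ∘ₗ coact = g := by
    intro g hg2
    ext v
    obtain ⟨t, ht⟩ := TensorProduct.exists_finset (R := R) (coact v)
    have hcom : Coalgebra.comul (R := R) (g v) = ∑ l ∈ t, g l.2 ⊗ₜ[R] l.1 := by
      have h := hg2 v
      rw [ht, map_sum] at h
      have h2 := congrArg (TensorProduct.comm R B B).symm h
      simpa [map_sum] using h2
    have := sum_counit_left_smul (g v) hcom
    calc ((TensorProduct.rid R B).toLinearMap ∘ₗ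
          LinearMap.lTensor B ((Coalgebra.counit : B →ₗ[R] R) ∘ₗ g) ∘ₗ coact) v
        = ∑ l ∈ t, Coalgebra.counit (R := R) (g l.2) • l.1 := by
          simp [ht, map_sum]
      _ = g v := this
  -- Key fact 1: if `g` is a module map, then `ε ∘ g` is `ε`-equivariant.
  have key1 : ∀ g : V →ₗ[R] B,
      (∀ (b : B) (v : V), g (act b v) = adjActT S' (b ⊗ₜ[R] g v)) →
      ∀ (b : B) (v : V), Coalgebra.counit (R := R) (g (act b v)) =
        Coalgebra.counit (R := R) b * Coalgebra.counit (R := R) (g v) := by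
    intro g hg1 b v
    obtain ⟨s, hs⟩ := TensorProduct.exists_finset (R := R) (Coalgebra.comul (R := R) b)
    have hεb : Coalgebra.counit (R := R) b =
        ∑ i ∈ s, Coalgebra.counit (R := R) i.1 * Coalgebra.counit (R := R) i.2 := by
      rw [← sum_counit_left_smul b hs, map_sum]
      refine Finset.sum_congr rfl fun i _ => by simp
    rw [hg1 b v, adjActT_tmul S' b (g v) hs, map_sum, hεb, Finset.sum_mul]
    refine Finset.sum_congr rfl fun i _ => ?_
    rw [Bialgebra.counit_mul, Bialgebra.counit_mul, counit_S' S' hS'₂]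
    ring
  -- Key fact 4: if `f` is `ε`-equivariant, then `G f` is a module map.
  have key4 : ∀ f : V →ₗ[R] R,
      (∀ (b : B) (v : V), f (act b v) = Coalgebra.counit (R := R) b * f v) →
      ∀ (b : B) (v : V),
        ((TensorProduct.rid R B).toLinearMap ∘ₗ LinearMap.lTensor B f ∘ₗ coact) (act b v) =
          adjActT S' (b ⊗ₜ[R]
            ((TensorProduct.rid R B).toLinearMap ∘ₗ LinearMap.lTensor B f ∘ₗ coact) v) := by
    intro f hf b v
    obtain ⟨s₁, h₁⟩ := TensorProduct.exists_finset (R := R) (Coalgebra.comul (R := R) b)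
    obtain ⟨s₃, h₃⟩ := TensorProduct.exists_finset (R := R) (coact v)
    set s₂ : B × B → Finset (B × B) := fun i =>
      (TensorProduct.exists_finset (R := R) (Coalgebra.comul (R := R) i.1)).choose with hs₂def
    have h₂ : ∀ i : B × B, Coalgebra.comul (R := R) i.1 =
        ∑ j ∈ s₂ i, j.1 ⊗ₜ[R] j.2 :=
      fun i => (TensorProduct.exists_finset (R := R)
        (Coalgebra.comul (R := R) i.1)).choose_spec
    have hc := hDY.compat b v (B × B) s₁ Prod.fst Prod.snd h₁
      (B × B) s₂ (fun _ j => j.1) (fun _ j => j.2) (fun i _ => h₂ i)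
      (B × V) s₃ Prod.fst Prod.snd h₃
    have hS'i : ∀ i : B × B,
        S' i.1 = ∑ j ∈ s₂ i, Coalgebra.counit (R := R) j.2 • S' j.1 := by
      intro i
      conv_lhs => rw [← sum_counit_right_smul i.1 (h₂ i)]
      rw [map_sum]
      exact Finset.sum_congr rfl fun j _ => by rw [map_smul]
    have hGfv : ((TensorProduct.rid R B).toLinearMap ∘ₗ
        LinearMap.lTensor B f ∘ₗ coact) v = ∑ l ∈ s₃, f l.2 • l.1 := by
      simp [h₃, map_sum]
    calc ((TensorProduct.rid R B).toLinearMap ∘ₗ LinearMap.lTensor B f ∘ₗ coact) (act b v)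
        = ∑ i ∈ s₁, ∑ j ∈ s₂ i, ∑ l ∈ s₃,
            (Coalgebra.counit (R := R) j.2 * f l.2) • (i.2 * l.1 * S' j.1) := by
          simp only [LinearMap.comp_apply, hc, map_sum, LinearMap.lTensor_tmul,
            LinearEquiv.coe_coe, TensorProduct.rid_tmul, hf]
      _ = ∑ i ∈ s₁, ∑ l ∈ s₃, f l.2 • (i.2 * l.1 * S' i.1) := by
          refine Finset.sum_congr rfl fun i _ => ?_
          rw [Finset.sum_comm]
          refine Finset.sum_congr rfl fun l _ => ?_
          rw [hS'i i, Finset.mul_sum, Finset.smul_sum]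
          refine Finset.sum_congr rfl fun j _ => ?_
          rw [mul_comm, mul_smul, mul_smul_comm]
      _ = adjActT S' (b ⊗ₜ[R] ((TensorProduct.rid R B).toLinearMap ∘ₗ
            LinearMap.lTensor B f ∘ₗ coact) v) := by
          rw [hGfv, adjActT_tmul S' b _ h₁]
          refine (Finset.sum_congr rfl fun i _ => ?_).symm
          rw [Finset.mul_sum, Finset.sum_mul]
          refine Finset.sum_congr rfl fun l _ => ?_
          rw [mul_smul_comm, smul_mul_assoc]
  -- Key fact 5: `G f` is always a comodule map.
  have key5 : ∀ f : V →ₗ[R] R, ∀ v : V,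
      (TensorProduct.comm R B B).toLinearMap
          (Coalgebra.comul (R := R)
            (((TensorProduct.rid R B).toLinearMap ∘ₗ LinearMap.lTensor B f ∘ₗ coact) v)) =
        LinearMap.lTensor B
          ((TensorProduct.rid R B).toLinearMap ∘ₗ LinearMap.lTensor B f ∘ₗ coact)
          (coact v) := by
    intro f v
    have hcch := LinearMap.congr_fun (comm_comul_h (R := R) (B := B) f) (coact v)
    have hcoass := LinearMap.congr_fun hDY.coassoc v
    simp only [LinearMap.comp_apply] at hcch hcoass ⊢
    rw [hcch, hcoass]
    simp [LinearMap.lTensor_comp, ← LinearMap.comp_assoc]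
  refine ⟨⟨?_, ?_, ?_⟩, fun g hg1 hg2 => key2 g hg2, fun f hf => ⟨key4 f hf, key5 f⟩⟩
  · -- MapsTo
    intro g hg
    intro b v
    exact key1 g hg.1 b v
  · -- InjOn
    intro g hg g' hg' h
    rw [← key2 g hg.2, ← key2 g' hg'.2]
    simp only at h
    rw [h]
  · -- SurjOn
    intro f hf
    refine ⟨(TensorProduct.rid R B).toLinearMap ∘ₗ LinearMap.lTensor B f ∘ₗ coact,
      ⟨key4 f hf, key5 f⟩, key3 f⟩
end
end
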